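/- arXiv:2208.07567 — 5 statements merged into one kernel-verified Lean document; each statement's English description precedes it below -/
import Mathlib

section
/- Let T be a triangle in ℝ² with vertices v, w, x, such that each of the three sides of T intersects the closed unit disk centered at the origin. If the interior angle of T at v is at least π/3, then v is at distance at most 2 from the origin. -/
open MeasureTheory Metric Set
noncomputable section

abbrev E2 := EuclideanSpace ℝ (Fin 2)

open Real InnerProductGeometry in
/-- Triangle inequality for Real.Angle's toReal. -/
lemma abs_toReal_add_le (a b : Real.Angle) :
    |(a + b).toReal| ≤ |a.toReal| + |b.toReal| := by
  set x := a.toReal with hx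
  set y := b.toReal with hy
  have hx1 : -π < x := a.neg_pi_lt_toReal
  have hx2 : x ≤ π := a.toReal_le_pi
  have hy1 : -π < y := b.neg_pi_lt_toReal
  have hy2 : y ≤ π := b.toReal_le_pi
  have hab : a + b = ((x + y : ℝ) : Real.Angle) := by
    rw [Real.Angle.coe_add, a.coe_toReal, b.coe_toReal]
  have hpi : (0:ℝ) < π := Real.pi_pos
  rcases le_or_gt (x + y) π with h1 | h1
  · rcases lt_or_ge (-π) (x + y) with h2 | h2
    · rw [hab, Real.Angle.toReal_coe_eq_self_iff.mpr ⟨h2, h1⟩]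
      exact abs_add_le x y
    · -- x + y ≤ -π : shift by 2π
      have hab2 : a + b = ((x + y + 2 * π : ℝ) : Real.Angle) := by
        rw [Real.Angle.coe_add (x+y), Real.Angle.coe_two_pi, add_zero, hab]
      rw [hab2, Real.Angle.toReal_coe_eq_self_iff.mpr ⟨by linarith, by linarith⟩]
      have hx0 : x < 0 := by linarith
      have hy0 : y < 0 := by linarith
      rw [abs_of_nonneg (by linarith), abs_of_neg hx0, abs_of_neg hy0]
      linarith
  · -- x + y > π : shift by -2π
    have hab2 : a + b = ((x + y - 2 * π : ℝ) : Real.Angle) := by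
      rw [sub_eq_add_neg, Real.Angle.coe_add (x+y), Real.Angle.coe_neg,
        Real.Angle.coe_two_pi, neg_zero, add_zero, hab]
    rw [hab2, Real.Angle.toReal_coe_eq_self_iff.mpr ⟨by linarith, by linarith⟩]
    have hx0 : 0 < x := by linarith
    have hy0 : 0 < y := by linarith
    rw [abs_of_nonpos (by linarith), abs_of_pos hx0, abs_of_pos hy0]
    linarith

open Real InnerProductGeometry in
/-- Triangle inequality for unoriented angles in the plane. -/
lemma angle_triangle_E2 {u a z : E2} (hu : u ≠ 0) (ha : a ≠ 0) (hz : z ≠ 0) :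
    angle u z ≤ angle u a + angle a z := by
  haveI : Fact (Module.finrank ℝ E2 = 2) := ⟨finrank_euclideanSpace_fin⟩
  set o : Orientation ℝ E2 (Fin 2) := (EuclideanSpace.basisFun (Fin 2) ℝ).toBasis.orientation
  rw [o.angle_eq_abs_oangle_toReal hu hz, o.angle_eq_abs_oangle_toReal hu ha,
    o.angle_eq_abs_oangle_toReal ha hz, ← o.oangle_add hu ha hz]
  exact abs_toReal_add_le _ _

open Real InnerProductGeometry RealInnerProductSpace in
/-- If `‖p‖ ≤ 1` and the angle at `v` between `p` and the origin is at least `π/6`,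
then `‖v‖ ≤ 2`. -/
lemma key_lemma {v p : E2} (hp : ‖p‖ ≤ 1)
    (hα : π / 6 ≤ angle (p - v) (-v)) : ‖v‖ ≤ 2 := by
  set α := angle (p - v) (-v) with hαdef
  have hα2 : α ≤ π := angle_le_pi _ _
  have hcossin : Real.sin α ^ 2 + Real.cos α ^ 2 = 1 := Real.sin_sq_add_cos_sq α
  have hinner : Real.cos α * (‖p - v‖ * ‖-v‖) = ⟪p - v, -v⟫ :=
    cos_angle_mul_norm_mul_norm _ _
  have hexp : ‖p‖ ^ 2 = ‖p - v‖ ^ 2 - 2 * ⟪p - v, -v⟫ + ‖v‖ ^ 2 := by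
    have h : ‖p‖ ^ 2 = ‖(p - v) - (-v)‖ ^ 2 := by rw [sub_neg_eq_add, sub_add_cancel]
    rw [h, norm_sub_sq_real, norm_neg]
  rw [← hinner, norm_neg] at hexp
  have hpnn : (0:ℝ) ≤ ‖p‖ := norm_nonneg _
  have hvnn : (0:ℝ) ≤ ‖v‖ := norm_nonneg _
  rcases le_or_gt (Real.cos α) 0 with hc | hc
  · -- obtuse case: ‖v‖ ≤ ‖p‖ ≤ 1
    have h1 : 0 ≤ -(Real.cos α) * (‖p - v‖ * ‖v‖) :=
      mul_nonneg (neg_nonneg.mpr hc) (mul_nonneg (norm_nonneg _) hvnn)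
    have hp1 : ‖p‖ ^ 2 ≤ 1 := by nlinarith
    nlinarith [sq_nonneg ‖p - v‖, sq_nonneg (‖v‖ - 1)]
  · -- acute case: sin α ≥ 1/2
    have hαlt : α < π / 2 := by
      by_contra hle
      push_neg at hle
      exact absurd hc (not_lt.mpr (Real.cos_nonpos_of_pi_div_two_le_of_le hle
        (by linarith [Real.pi_pos])))
    have hsin : (1:ℝ)/2 ≤ Real.sin α := by
      have := Real.sin_pi_div_six
      calc (1:ℝ)/2 = Real.sin (π/6) := by rw [Real.sin_pi_div_six]
        _ ≤ Real.sin α :=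
            Real.sin_le_sin_of_le_of_le_pi_div_two (by linarith [Real.pi_pos])
              (by linarith) hα
    -- ‖p‖² ≥ ‖v‖² sin² α
    have hkey : ‖v‖ ^ 2 * Real.sin α ^ 2 ≤ ‖p‖ ^ 2 := by
      nlinarith [sq_nonneg (‖p - v‖ - ‖v‖ * Real.cos α)]
    have hsq : (0:ℝ) ≤ Real.sin α ^ 2 - 1/4 := by nlinarith
    have h4 : ‖v‖ ^ 2 ≤ 4 := by
      nlinarith [mul_nonneg (mul_nonneg hvnn hvnn) hsq]
    nlinarith [sq_nonneg (‖v‖ - 2)]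

open Real InnerProductGeometry in
theorem stmt9 (v w x : E2)
    (h1 : (segment ℝ v w ∩ closedBall (0 : E2) 1).Nonempty)
    (h2 : (segment ℝ w x ∩ closedBall (0 : E2) 1).Nonempty)
    (h3 : (segment ℝ x v ∩ closedBall (0 : E2) 1).Nonempty)
    (hang : Real.pi / 3 ≤ EuclideanGeometry.angle w v x) :
    ‖v‖ ≤ 2 := by
  obtain ⟨p, hp1, hp2⟩ := h1
  obtain ⟨q, hq1, hq2⟩ := h3
  rw [mem_closedBall, dist_zero_right] at hp2 hq2
  -- degenerate cases
  by_cases hv0 : v = 0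
  · simp [hv0]
  by_cases hpv : p = v
  · rw [hpv] at hp2; linarith
  by_cases hqv : q = v
  · rw [hqv] at hq2; linarith
  -- extract scalar parameters
  rw [segment_eq_image'] at hp1
  rw [segment_symm, segment_eq_image'] at hq1
  obtain ⟨s, hs, hps⟩ := hp1
  obtain ⟨t, ht, hqt⟩ := hq1
  have hs0 : 0 < s := by
    rcases lt_or_eq_of_le hs.1 with h | h
    · exact h
    · exfalso; apply hpv; rw [← hps, ← h]; simp
  have ht0 : 0 < t := by
    rcases lt_or_eq_of_le ht.1 with h | h
    · exact h
    · exfalso; apply hqv; rw [← hqt, ← h]; simp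
  have hpw : p - v = s • (w - v) := by rw [← hps]; simp
  have hqx : q - v = t • (x - v) := by rw [← hqt]; simp
  -- the angle at v between p and q equals the angle w v x
  have hangpq : π / 3 ≤ angle (p - v) (q - v) := by
    rw [hpw, hqx, angle_smul_left_of_pos _ _ hs0, angle_smul_right_of_pos _ _ ht0]
    exact hang
  -- triangle inequality for angles
  have hune : p - v ≠ 0 := sub_ne_zero_of_ne hpv
  have hqne : q - v ≠ 0 := sub_ne_zero_of_ne hqv
  have hane : (-v : E2) ≠ 0 := neg_ne_zero.mpr hv0
  have htri : angle (p - v) (q - v) ≤ angle (p - v) (-v) + angle (-v) (q - v) :=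
    angle_triangle_E2 hune hane hqne
  -- one of the two angles is at least π/6
  rcases le_or_gt (π / 6) (angle (p - v) (-v)) with h | h
  · exact key_lemma hp2 h
  · have : π / 6 ≤ angle (-v) (q - v) := by linarith
    rw [angle_comm] at this
    exact key_lemma hq2 this
end
end

section
/- Let P be a convex polygon in ℝ² containing the closed unit disk centered at the origin. Then at most two vertices of P whose pairwise-separating boundary arcs each contain a point of the unit disk can be at distance strictly greater than 2 from the origin. More precisely: there do not exist three points v, w, x in P, each at distance strictly greater than 2 from the origin, such that every side of the triangle vwx intersects the unit disk. -/
open MeasureTheory Metric Set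
open scoped RealInnerProductSpace
noncomputable section

private lemma le_of_sq_le_sq' {x y : ℝ} (hx : 0 ≤ x) (hy : 0 ≤ y) (h : x^2 ≤ y^2) : x ≤ y := by
  have := Real.sqrt_le_sqrt h
  rwa [Real.sqrt_sq hx, Real.sqrt_sq hy] at this

lemma scalar_core (d p1 r1 A B a b Pn Rn : ℝ) (hd : 2 < d)
    (hp0 : 0 ≤ p1) (hp1 : p1 ≤ 1) (hr0 : 0 ≤ r1) (hr1 : r1 ≤ 1)
    (ha0 : 0 ≤ a) (hb0 : 0 ≤ b) (hP0 : 0 ≤ Pn) (hR0 : 0 ≤ Rn)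
    (ha : a^2 = p1^2 - 2*A + d^2) (hb : b^2 = r1^2 - 2*B + d^2)
    (hPd : d^2*Pn^2 = d^2*p1^2 - A^2) (hRd : d^2*Rn^2 = d^2*r1^2 - B^2)
    (hA : A ≤ d*p1) (hB : B ≤ d*r1) :
    a*b/2 < (d^2-A)*(d^2-B)/d^2 - Pn*Rn := by
  have hd0 : (0:ℝ) < d := by linarith
  have hd2 : (0:ℝ) < d^2 := by positivity
  have h2d : d < d^2 := by
    have h := mul_lt_mul_of_pos_left (show (1:ℝ) < d by linarith) hd0
    rw [mul_one, ← pow_two] at h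
    exact h
  have hA1 : A ≤ d := by
    have := mul_le_mul_of_nonneg_left hp1 hd0.le
    linarith
  have hB1 : B ≤ d := by
    have := mul_le_mul_of_nonneg_left hr1 hd0.le
    linarith
  have hX : 0 < d^2 - A := by linarith
  have hY : 0 < d^2 - B := by linarith
  have hdp1 : 1 ≤ d - p1 := by linarith
  have hdr1 : 1 ≤ d - r1 := by linarith
  have hap2 : 1 ≤ a^2 := by
    have h2 : (d - p1)^2 ≤ a^2 := by
      have h1 : 2*A ≤ 2*(d*p1) := by linarith
      linarith [h1, ha]
    have h4 : 1*1 ≤ (d-p1)*(d-p1) := mul_le_mul hdp1 hdp1 (by norm_num) (by linarith)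
    linarith [h4, h2]
  have hbp2 : 1 ≤ b^2 := by
    have h2 : (d - r1)^2 ≤ b^2 := by
      have h1 : 2*B ≤ 2*(d*r1) := by linarith
      linarith [h1, hb]
    have h4 : 1*1 ≤ (d-r1)*(d-r1) := mul_le_mul hdr1 hdr1 (by norm_num) (by linarith)
    linarith [h4, h2]
  have hap : 1 ≤ a := le_of_sq_le_sq' (by norm_num) ha0 (by simpa using hap2)
  have hbp : 1 ≤ b := le_of_sq_le_sq' (by norm_num) hb0 (by simpa using hbp2)
  have hdiffP : (a*p1)^2 - (d*Pn)^2 = (p1^2 - A)^2 := by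
    linear_combination p1^2*ha - hPd
  have hdiffR : (b*r1)^2 - (d*Rn)^2 = (r1^2 - B)^2 := by
    linear_combination r1^2*hb - hRd
  have e1P : (d*Pn)^2 ≤ (a*p1)^2 := by linarith [hdiffP, sq_nonneg (p1^2 - A)]
  have e1R : (d*Rn)^2 ≤ (b*r1)^2 := by linarith [hdiffR, sq_nonneg (r1^2 - B)]
  have hdP : d*Pn ≤ a*p1 := le_of_sq_le_sq' (mul_nonneg hd0.le hP0)
    (mul_nonneg ha0 hp0) e1P
  have hdR : d*Rn ≤ b*r1 := le_of_sq_le_sq' (mul_nonneg hd0.le hR0)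
    (mul_nonneg hb0 hr0) e1R
  have hXsq : (d^2-A)^2 = d^2*a^2 - d^2*Pn^2 := by
    linear_combination (-(d^2))*ha + hPd
  have hYsq : (d^2-B)^2 = d^2*b^2 - d^2*Rn^2 := by
    linear_combination (-(d^2))*hb + hRd
  have hp1sq : p1^2 ≤ 1 := by linarith [mul_le_mul hp1 hp1 hp0 (by norm_num : (0:ℝ) ≤ 1)]
  have hr1sq : r1^2 ≤ 1 := by linarith [mul_le_mul hr1 hr1 hr0 (by norm_num : (0:ℝ) ≤ 1)]
  have hap1 : a^2*p1^2 ≤ a^2 := by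
    have := mul_le_mul_of_nonneg_left hp1sq (sq_nonneg a)
    linarith [this]
  have hbr1 : b^2*r1^2 ≤ b^2 := by
    have := mul_le_mul_of_nonneg_left hr1sq (sq_nonneg b)
    linarith [this]
  have hX2 : a^2*(d^2-1) ≤ (d^2-A)^2 := by linarith [e1P, hXsq, hap1]
  have hY2 : b^2*(d^2-1) ≤ (d^2-B)^2 := by linarith [e1R, hYsq, hbr1]
  have hd21 : (0:ℝ) < d^2 - 1 := by linarith
  have hXY : a*b*(d^2-1) ≤ (d^2-A)*(d^2-B) := by
    apply le_of_sq_le_sq' (mul_nonneg (mul_nonneg ha0 hb0) hd21.le)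
      (mul_nonneg hX.le hY.le)
    calc (a*b*(d^2-1))^2 = (a^2*(d^2-1))*(b^2*(d^2-1)) := by ring
    _ ≤ (d^2-A)^2*(d^2-B)^2 := mul_le_mul hX2 hY2
        (mul_nonneg (sq_nonneg b) hd21.le) (sq_nonneg _)
    _ = ((d^2-A)*(d^2-B))^2 := by ring
  have hPR : d^2*(Pn*Rn) ≤ a*b := by
    have hpr1 : p1*r1 ≤ 1 := by
      calc p1*r1 ≤ 1*r1 := mul_le_mul_of_nonneg_right hp1 hr0
      _ = r1 := one_mul r1
      _ ≤ 1 := hr1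
    calc d^2*(Pn*Rn) = (d*Pn)*(d*Rn) := by ring
    _ ≤ (a*p1)*(b*r1) := mul_le_mul hdP hdR (mul_nonneg hd0.le hR0)
        (mul_nonneg ha0 hp0)
    _ = (a*b)*(p1*r1) := by ring
    _ ≤ (a*b)*1 := mul_le_mul_of_nonneg_left hpr1
        (mul_nonneg ha0 hb0)
    _ = a*b := by ring
  have hR2 : (d^2-A)*(d^2-B)/d^2 - Pn*Rn = ((d^2-A)*(d^2-B) - d^2*(Pn*Rn))/d^2 := by
    field_simp
  rw [hR2, lt_div_iff₀ hd2]
  have h4 : (2:ℝ)*2 < d*d := mul_lt_mul'' hd hd (by norm_num) (by norm_num)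
  have hprod : 0 < a*b*(d^2/2 - 2) := by
    apply mul_pos (mul_pos (by linarith : (0:ℝ) < a) (by linarith : (0:ℝ) < b))
    linarith [h4, pow_two d]
  linarith [hXY, hPR, hprod]

lemma key (v p r : E2) (hv : 2 < ‖v‖) (hp : ‖p‖ ≤ 1) (hr : ‖r‖ ≤ 1) :
    ‖p - v‖ * ‖r - v‖ / 2 < ⟪p - v, r - v⟫ := by
  have hd0 : (0:ℝ) < ‖v‖ := by linarith
  have hd0' : ‖v‖ ≠ 0 := ne_of_gt hd0
  have hN : (‖v‖:ℝ)^2 ≠ 0 := pow_ne_zero _ hd0'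
  have hip : ⟪p - (⟪v,p⟫/‖v‖^2) • v, r - (⟪v,r⟫/‖v‖^2) • v⟫
      = ⟪p,r⟫ - ⟪v,p⟫*⟪v,r⟫/‖v‖^2 := by
    simp only [inner_sub_left, inner_sub_right, real_inner_smul_left, real_inner_smul_right,
      real_inner_self_eq_norm_sq, real_inner_comm p v, real_inner_comm r v]
    field_simp
    try ring
  have hPn : ‖v‖^2 * ‖p - (⟪v,p⟫/‖v‖^2) • v‖^2 = ‖v‖^2 * ‖p‖^2 - ⟪v,p⟫^2 := by
    rw [norm_sub_sq_real, real_inner_smul_right, norm_smul, real_inner_comm p v]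
    rw [mul_pow, Real.norm_eq_abs, sq_abs]
    field_simp
    try ring
  have hRn : ‖v‖^2 * ‖r - (⟪v,r⟫/‖v‖^2) • v‖^2 = ‖v‖^2 * ‖r‖^2 - ⟪v,r⟫^2 := by
    rw [norm_sub_sq_real, real_inner_smul_right, norm_smul, real_inner_comm r v]
    rw [mul_pow, Real.norm_eq_abs, sq_abs]
    field_simp
    try ring
  have hCS : -(‖p - (⟪v,p⟫/‖v‖^2) • v‖ * ‖r - (⟪v,r⟫/‖v‖^2) • v‖)
      ≤ ⟪p - (⟪v,p⟫/‖v‖^2) • v, r - (⟪v,r⟫/‖v‖^2) • v⟫ := by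
    have h := abs_real_inner_le_norm (p - (⟪v,p⟫/‖v‖^2) • v) (r - (⟪v,r⟫/‖v‖^2) • v)
    have h2 := neg_abs_le (⟪p - (⟪v,p⟫/‖v‖^2) • v, r - (⟪v,r⟫/‖v‖^2) • v⟫ : ℝ)
    linarith
  have hipv : ⟪p - v, r - v⟫ = ⟪p,r⟫ - ⟪v,p⟫ - ⟪v,r⟫ + ‖v‖^2 := by
    simp only [inner_sub_left, inner_sub_right, real_inner_self_eq_norm_sq,
      real_inner_comm p v, real_inner_comm r v]
    ring
  have hae : ‖p - v‖^2 = ‖p‖^2 - 2*⟪v,p⟫ + ‖v‖^2 := by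
    rw [norm_sub_sq_real, real_inner_comm p v]
    try ring
  have hbe : ‖r - v‖^2 = ‖r‖^2 - 2*⟪v,r⟫ + ‖v‖^2 := by
    rw [norm_sub_sq_real, real_inner_comm r v]
    try ring
  have hAle : ⟪v,p⟫ ≤ ‖v‖ * ‖p‖ := real_inner_le_norm v p
  have hBle : ⟪v,r⟫ ≤ ‖v‖ * ‖r‖ := real_inner_le_norm v r
  have hcore := scalar_core ‖v‖ ‖p‖ ‖r‖ ⟪v,p⟫ ⟪v,r⟫ ‖p - v‖ ‖r - v‖
    ‖p - (⟪v,p⟫/‖v‖^2) • v‖ ‖r - (⟪v,r⟫/‖v‖^2) • v‖ hv (norm_nonneg _) hp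
    (norm_nonneg _) hr (norm_nonneg _) (norm_nonneg _) (norm_nonneg _) (norm_nonneg _)
    hae hbe hPn hRn hAle hBle
  have he : (‖v‖^2-⟪v,p⟫)*(‖v‖^2-⟪v,r⟫)/‖v‖^2
      = ⟪v,p⟫*⟪v,r⟫/‖v‖^2 - ⟪v,p⟫ - ⟪v,r⟫ + ‖v‖^2 := by
    field_simp
    ring
  rw [he] at hcore
  have h2 := hCS.trans_eq hip
  rw [hipv]
  linarith

lemma angle_lt (v w x : E2) (hv : 2 < ‖v‖) (hw : w ≠ v) (hx : x ≠ v)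
    (hp : ∃ p ∈ segment ℝ v w, ‖p‖ ≤ 1) (hr : ∃ r ∈ segment ℝ v x, ‖r‖ ≤ 1) :
    InnerProductGeometry.angle (w - v) (x - v) < Real.pi / 3 := by
  obtain ⟨p, hpseg, hp1⟩ := hp
  obtain ⟨r, hrseg, hr1⟩ := hr
  obtain ⟨a1, b1, ha1, hb1, hab1, hpe⟩ := hpseg
  obtain ⟨a2, b2, ha2, hb2, hab2, hre⟩ := hrseg
  have hpv : p - v = b1 • (w - v) := by
    rw [← hpe]
    have h1 : a1 = 1 - b1 := by linarith
    rw [h1]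
    module
  have hrv : r - v = b2 • (x - v) := by
    rw [← hre]
    have h1 : a2 = 1 - b2 := by linarith
    rw [h1]
    module
  have hb1pos : 0 < b1 := by
    rcases hb1.lt_or_eq with h | h
    · exact h
    · exfalso
      rw [← h, zero_smul] at hpv
      have hpv' : p = v := by rwa [sub_eq_zero] at hpv
      rw [hpv'] at hp1
      linarith
  have hb2pos : 0 < b2 := by
    rcases hb2.lt_or_eq with h | h
    · exact h
    · exfalso
      rw [← h, zero_smul] at hrv
      have hrv' : r = v := by rwa [sub_eq_zero] at hrv
      rw [hrv'] at hr1
      linarith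
  have hkey := key v p r hv hp1 hr1
  rw [hpv, hrv, norm_smul, norm_smul, real_inner_smul_left, real_inner_smul_right,
    Real.norm_eq_abs, Real.norm_eq_abs, abs_of_pos hb1pos, abs_of_pos hb2pos] at hkey
  have hbb : 0 < b1 * b2 := mul_pos hb1pos hb2pos
  have h' : (b1*b2) * (‖w - v‖ * ‖x - v‖ / 2) < (b1*b2) * ⟪w - v, x - v⟫ := by
    calc (b1*b2) * (‖w - v‖ * ‖x - v‖ / 2) = b1 * ‖w - v‖ * (b2 * ‖x - v‖) / 2 := by ring
    _ < b1 * (b2 * ⟪w - v, x - v⟫) := hkey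
    _ = (b1*b2) * ⟪w - v, x - v⟫ := by ring
  have hmain : ‖w - v‖ * ‖x - v‖ / 2 < ⟪w - v, x - v⟫ :=
    lt_of_mul_lt_mul_left h' hbb.le
  by_contra hcon
  push_neg at hcon
  have hnw : 0 < ‖w - v‖ := norm_pos_iff.mpr (sub_ne_zero.mpr hw)
  have hnx : 0 < ‖x - v‖ := norm_pos_iff.mpr (sub_ne_zero.mpr hx)
  have hcosle : Real.cos (InnerProductGeometry.angle (w - v) (x - v)) ≤ Real.cos (Real.pi / 3) :=
    Real.cos_le_cos_of_nonneg_of_le_pi (by positivity) (InnerProductGeometry.angle_le_pi _ _) hcon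
  rw [Real.cos_pi_div_three, InnerProductGeometry.cos_angle] at hcosle
  rw [div_le_iff₀ (by positivity)] at hcosle
  linarith

theorem stmt10 (P : Set E2) (hP : Convex ℝ P) (hball : closedBall (0 : E2) 1 ⊆ P) :
    ¬ ∃ v ∈ P, ∃ w ∈ P, ∃ x ∈ P, 2 < ‖v‖ ∧ 2 < ‖w‖ ∧ 2 < ‖x‖ ∧
      (segment ℝ v w ∩ closedBall (0 : E2) 1).Nonempty ∧
      (segment ℝ w x ∩ closedBall (0 : E2) 1).Nonempty ∧
      (segment ℝ x v ∩ closedBall (0 : E2) 1).Nonempty := by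
  rintro ⟨v, -, w, -, x, -, hv, hw, hx, ⟨p, hpseg, hpb⟩, ⟨q, hqseg, hqb⟩, ⟨r, hrseg, hrb⟩⟩
  rw [mem_closedBall_zero_iff] at hpb hqb hrb
  have hwv : w ≠ v := by
    rintro rfl
    rw [segment_same] at hpseg
    rw [hpseg] at hpb
    linarith
  have hxw : x ≠ w := by
    rintro rfl
    rw [segment_same] at hqseg
    rw [hqseg] at hqb
    linarith
  have hvx : v ≠ x := by
    rintro rfl
    rw [segment_same] at hrseg
    rw [hrseg] at hrb
    linarith
  have hpseg' : p ∈ segment ℝ w v := by rwa [segment_symm]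
  have hqseg' : q ∈ segment ℝ x w := by rwa [segment_symm]
  have hrseg' : r ∈ segment ℝ v x := by rwa [segment_symm]
  have h1 : InnerProductGeometry.angle (x - v) (w - v) < Real.pi / 3 := by
    rw [InnerProductGeometry.angle_comm]
    exact angle_lt v w x hv hwv (Ne.symm hvx) ⟨p, hpseg, hpb⟩ ⟨r, hrseg', hrb⟩
  have h2 : InnerProductGeometry.angle (v - w) (x - w) < Real.pi / 3 :=
    angle_lt w v x hw (Ne.symm hwv) hxw ⟨p, hpseg', hpb⟩ ⟨q, hqseg, hqb⟩
  have h3 : InnerProductGeometry.angle (w - x) (v - x) < Real.pi / 3 :=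
    angle_lt x w v hx (Ne.symm hxw) hvx ⟨q, hqseg', hqb⟩ ⟨r, hrseg, hrb⟩
  have hsum := EuclideanGeometry.angle_add_angle_add_angle_eq_pi (V := E2) (P := E2)
    (p₁ := v) (p₂ := w) x hwv
  simp only [EuclideanGeometry.angle, vsub_eq_sub] at hsum
  linarith
end
end

section
/- Let O be a finite family of convex polygons in ℝ² whose vertices all have integer coordinates in {0,…,N}². Let P_opt be a minimum-area convex polygon intersecting every member of O. If area(P_opt) > 0, then area(P_opt) ≥ c/N⁸ for some absolute constant c > 0. -/
open MeasureTheory Metric Set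
open scoped RealInnerProductSpace
noncomputable section

def isGrid (N : ℕ) (p : E2) : Prop := ∀ i : Fin 2, ∃ m : ℕ, m ≤ N ∧ p i = (m : ℝ)

namespace Stmt14

lemma inner_coords (x y : E2) : ⟪x, y⟫ = x 0 * y 0 + x 1 * y 1 := by
  simp [PiLp.inner_apply, Fin.sum_univ_two, RCLike.inner_apply, mul_comm]

lemma normsq_coords (x : E2) : ‖x‖ ^ 2 = x 0 ^ 2 + x 1 ^ 2 := by
  rw [← real_inner_self_eq_norm_sq, inner_coords]; ring

lemma mem_sphere_iff_sumsq {x : E2} : x ∈ sphere (0:E2) 1 ↔ x 0 ^ 2 + x 1 ^ 2 = 1 := by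
  rw [mem_sphere_zero_iff_norm, ← normsq_coords]
  constructor
  · intro h; rw [h]; norm_num
  · intro h
    have h0 : (0:ℝ) ≤ ‖x‖ := norm_nonneg x
    nlinarith

def perp (v : E2) : E2 := (WithLp.equiv 2 (Fin 2 → ℝ)).symm ![-(v 1), v 0]

@[simp] lemma perp_c0 (v : E2) : perp v 0 = -(v 1) := rfl
@[simp] lemma perp_c1 (v : E2) : perp v 1 = v 0 := rfl

lemma inner_perp_left (v w : E2) : ⟪perp v, w⟫ = v 0 * w 1 - v 1 * w 0 := by
  rw [inner_coords, perp_c0, perp_c1]; ring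

lemma norm_perp (v : E2) : ‖perp v‖ = ‖v‖ := by
  have h1 := normsq_coords (perp v)
  have h2 := normsq_coords v
  have : ‖perp v‖ ^ 2 = ‖v‖ ^ 2 := by rw [h1, h2, perp_c0, perp_c1]; ring
  nlinarith [norm_nonneg (perp v), norm_nonneg v]

end Stmt14
namespace Stmt14
section Family
set_option linter.unusedSectionVars false

variable {ι : Type} [Fintype ι] [Nonempty ι] {n : ι → ℕ} (V : (i : ι) → Fin (n i + 1) → E2)

def mfun (i : ι) (u : E2) : ℝ := Finset.univ.inf' Finset.univ_nonempty fun p => ⟪u, V i p⟫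
def Mfun (i : ι) (u : E2) : ℝ := Finset.univ.sup' Finset.univ_nonempty fun p => ⟪u, V i p⟫
def hfun (k : ι × ι) (u : E2) : ℝ := mfun V k.1 u - Mfun V k.2 u
def gfun (u : E2) : ℝ := Finset.univ.sup' Finset.univ_nonempty fun k : ι × ι => hfun V k u

lemma continuous_gfun : Continuous (gfun V) := by
  apply Continuous.finset_sup'_apply Finset.univ_nonempty
  intro k _
  apply Continuous.sub
  · exact Continuous.finset_inf'_apply Finset.univ_nonempty
      (fun p _ => continuous_id.inner continuous_const)
  · exact Continuous.finset_sup'_apply Finset.univ_nonempty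
      (fun p _ => continuous_id.inner continuous_const)

lemma hfun_le (k : ι × ι) (p : Fin (n k.1 + 1)) (q : Fin (n k.2 + 1)) (u : E2) :
    hfun V k u ≤ ⟪u, V k.1 p - V k.2 q⟫ := by
  rw [inner_sub_right]
  have h1 : mfun V k.1 u ≤ ⟪u, V k.1 p⟫ := by
    unfold mfun; exact Finset.inf'_le (fun p => ⟪u, V k.1 p⟫) (Finset.mem_univ p)
  have h2 : ⟪u, V k.2 q⟫ ≤ Mfun V k.2 u := by
    unfold Mfun; exact Finset.le_sup' (fun p => ⟪u, V k.2 p⟫) (Finset.mem_univ q)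
  unfold hfun; linarith

lemma exists_min (k : ι × ι) (u : E2) :
    ∃ p q, hfun V k u = ⟪u, V k.1 p - V k.2 q⟫ := by
  obtain ⟨p, _, hp⟩ := Finset.exists_mem_eq_inf' (Finset.univ_nonempty) (fun p => ⟪u, V k.1 p⟫)
  obtain ⟨q, _, hq⟩ := Finset.exists_mem_eq_sup' (Finset.univ_nonempty) (fun q => ⟪u, V k.2 q⟫)
  exact ⟨p, q, by rw [inner_sub_right]; unfold hfun mfun Mfun; rw [← hp, ← hq]⟩

lemma exists_active (u : E2) : ∃ k : ι × ι, gfun V u = hfun V k u := by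
  obtain ⟨k, _, hk⟩ := Finset.exists_mem_eq_sup' (Finset.univ_nonempty)
    (fun k : ι × ι => hfun V k u)
  exact ⟨k, hk⟩

lemma hfun_le_gfun (k : ι × ι) (u : E2) : hfun V k u ≤ gfun V u := by
  unfold gfun; exact Finset.le_sup' (fun k : ι × ι => hfun V k u) (Finset.mem_univ k)

/-- Every difference of grid vertices has integer coordinates bounded by `N`. -/
lemma diff_int {N : ℕ} (hV : ∀ i j, isGrid N (V i j)) (k : ι × ι)
    (p : Fin (n k.1 + 1)) (q : Fin (n k.2 + 1)) :
    ∃ a b : ℤ, (V k.1 p - V k.2 q) 0 = (a : ℝ) ∧ (V k.1 p - V k.2 q) 1 = (b : ℝ) ∧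
      |a| ≤ (N : ℤ) ∧ |b| ≤ (N : ℤ) := by
  obtain ⟨m0, hm0, he0⟩ := hV k.1 p 0
  obtain ⟨m1, hm1, he1⟩ := hV k.1 p 1
  obtain ⟨l0, hl0, hf0⟩ := hV k.2 q 0
  obtain ⟨l1, hl1, hf1⟩ := hV k.2 q 1
  refine ⟨(m0 : ℤ) - l0, (m1 : ℤ) - l1, ?_, ?_, ?_, ?_⟩
  · simp [PiLp.sub_apply, he0, hf0]
  · simp [PiLp.sub_apply, he1, hf1]
  · rw [abs_le]; omega
  · rw [abs_le]; omega

lemma diff_norm_le {N : ℕ} (hV : ∀ i j, isGrid N (V i j)) (k : ι × ι)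
    (p : Fin (n k.1 + 1)) (q : Fin (n k.2 + 1)) :
    ‖V k.1 p - V k.2 q‖ ≤ 2 * N := by
  obtain ⟨a, b, h0, h1, ha, hb⟩ := diff_int V hV k p q
  have hsq := normsq_coords (V k.1 p - V k.2 q)
  rw [h0, h1] at hsq
  have ha' : |(a:ℝ)| ≤ (N:ℝ) := by exact_mod_cast (by exact_mod_cast ha : |(a:ℝ)| ≤ (N:ℝ))
  have hb' : |(b:ℝ)| ≤ (N:ℝ) := by exact_mod_cast (by exact_mod_cast hb : |(b:ℝ)| ≤ (N:ℝ))
  have h2 : ‖V k.1 p - V k.2 q‖ ^ 2 ≤ (2*N)^2 := by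
    rw [hsq]
    have := abs_le.1 ha'; have := abs_le.1 hb'
    have hN : (0:ℝ) ≤ N := Nat.cast_nonneg N
    nlinarith
  nlinarith [norm_nonneg (V k.1 p - V k.2 q), Nat.cast_nonneg (α := ℝ) N]

end Family
end Stmt14
namespace Stmt14
section Family
set_option linter.unusedSectionVars false
set_option maxHeartbeats 1000000
variable {ι : Type} [Fintype ι] [Nonempty ι] {n : ι → ℕ} (V : (i : ι) → Fin (n i + 1) → E2)

theorem gfun_lower {N : ℕ} (hN : 1 ≤ N) (hV : ∀ i j, isGrid N (V i j))
    (hpos : ∀ u ∈ sphere (0:E2) 1, 0 < gfun V u) :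
    ∀ u ∈ sphere (0:E2) 1, 1 / (3 * N) ≤ gfun V u := by
  have hNR : (1:ℝ) ≤ N := by exact_mod_cast hN
  have hsne : (sphere (0:E2) 1).Nonempty := by
    refine ⟨EuclideanSpace.single 0 1, ?_⟩
    rw [mem_sphere_zero_iff_norm, EuclideanSpace.norm_single]; norm_num
  obtain ⟨u, hu, hmin⟩ := (isCompact_sphere (0:E2) 1).exists_isMinOn hsne
    (continuous_gfun V).continuousOn
  suffices hmain : 1 / (3 * N) ≤ gfun V u by
    intro u' hu'
    exact le_trans hmain (isMinOn_iff.1 hmin u' hu')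
  set γ := gfun V u with hγdef
  have hγ : 0 < γ := hpos u hu
  have hu1 : u 0 ^ 2 + u 1 ^ 2 = 1 := mem_sphere_iff_sumsq.1 hu
  have hAex : ∃ w : E2, (∃ k : ι × ι, hfun V k u = γ ∧ ∃ p q, w = V k.1 p - V k.2 q)
      ∧ ⟪u, w⟫ = γ := by
    obtain ⟨k, hk⟩ := exists_active V u
    obtain ⟨p, q, hpq⟩ := exists_min V k u
    exact ⟨V k.1 p - V k.2 q, ⟨k, hk.symm, p, q, rfl⟩, by rw [← hpq, ← hk]⟩
  have hint : ∀ w : E2, (∃ k : ι × ι, hfun V k u = γ ∧ ∃ p q, w = V k.1 p - V k.2 q) →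
      ∃ a b : ℤ, w 0 = (a:ℝ) ∧ w 1 = (b:ℝ) ∧ |a| ≤ (N:ℤ) ∧ |b| ≤ (N:ℤ) := by
    rintro w ⟨k, -, p, q, rfl⟩
    exact diff_int V hV k p q
  by_cases htwo : ∃ w w' : E2,
      ((∃ k : ι × ι, hfun V k u = γ ∧ ∃ p q, w = V k.1 p - V k.2 q) ∧ ⟪u, w⟫ = γ) ∧
      ((∃ k : ι × ι, hfun V k u = γ ∧ ∃ p q, w' = V k.1 p - V k.2 q) ∧ ⟪u, w'⟫ = γ) ∧
      w ≠ w'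
  · -- two distinct active minimizers: rational critical direction
    obtain ⟨w, w', ⟨hwA, hwγ⟩, ⟨hw'A, hw'γ⟩, hne⟩ := htwo
    obtain ⟨a, b, ha0, hb0, haN, hbN⟩ := hint w hwA
    obtain ⟨a', b', ha0', hb0', haN', hbN'⟩ := hint w' hw'A
    rw [inner_coords, ha0, hb0] at hwγ
    rw [inner_coords, ha0', hb0'] at hw'γ
    have hz : u 0 * ((a:ℝ) - a') + u 1 * ((b:ℝ) - b') = 0 := by linarith
    set μ : ℝ := u 0 * ((b:ℝ) - b') - u 1 * ((a:ℝ) - a') with hμdef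
    have hz0 : ((a:ℝ) - a') = -μ * u 1 := by
      linear_combination u 0 * hz - ((a:ℝ) - ↑a') * hu1
    have hz1 : ((b:ℝ) - b') = μ * u 0 := by
      linear_combination u 1 * hz - ((b:ℝ) - ↑b') * hu1
    have hμne : μ ≠ 0 := by
      intro h0
      apply hne
      rw [h0] at hz0 hz1
      have e0 : w 0 = w' 0 := by rw [ha0, ha0']; linarith
      have e1 : w 1 = w' 1 := by rw [hb0, hb0']; linarith
      have hnz : ‖w - w'‖ ^ 2 = 0 := by
        rw [normsq_coords, PiLp.sub_apply, PiLp.sub_apply, e0, e1]; ring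
      have : ‖w - w'‖ = 0 := by
        have := norm_nonneg (w - w'); nlinarith
      exact sub_eq_zero.1 (norm_eq_zero.1 this)
    have hDcast : ((a * (b - b') - b * (a - a') : ℤ):ℝ) = μ * γ := by
      push_cast
      linear_combination (a:ℝ) * hz1 - (b:ℝ) * hz0 + μ * hwγ
    have hDne : a * (b - b') - b * (a - a') ≠ 0 := by
      intro h0
      rw [h0] at hDcast
      simp at hDcast
      rcases hDcast with h | h
      · exact hμne h
      · exact hγ.ne' h
    have hD2 : (1:ℝ) ≤ (μ * γ)^2 := by
      have h1 : (1:ℤ) ≤ |a * (b - b') - b * (a - a')| := Int.one_le_abs hDne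
      have h2 : (1:ℝ) ≤ |((a * (b - b') - b * (a - a') : ℤ):ℝ)| := by
        rw [← Int.cast_abs]; exact_mod_cast h1
      rw [hDcast] at h2
      nlinarith [abs_nonneg (μ*γ), sq_abs (μ*γ)]
    have hμ2 : μ^2 ≤ 9 * (N:ℝ)^2 := by
      have h1 : ((a:ℝ) - a')^2 + ((b:ℝ) - b')^2 = μ^2 := by
        rw [hz0, hz1]; linear_combination (μ^2) * hu1
      have haR : |(a:ℝ)| ≤ (N:ℝ) := by rw [← Int.cast_abs]; exact_mod_cast haN
      have haR' : |(a':ℝ)| ≤ (N:ℝ) := by rw [← Int.cast_abs]; exact_mod_cast haN'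
      have hbR : |(b:ℝ)| ≤ (N:ℝ) := by rw [← Int.cast_abs]; exact_mod_cast hbN
      have hbR' : |(b':ℝ)| ≤ (N:ℝ) := by rw [← Int.cast_abs]; exact_mod_cast hbN'
      have := abs_le.1 haR; have := abs_le.1 haR'
      have := abs_le.1 hbR; have := abs_le.1 hbR'
      nlinarith
    have hstep2 : μ^2*γ^2 ≤ 9*(N:ℝ)^2*γ^2 := mul_le_mul_of_nonneg_right hμ2 (sq_nonneg γ)
    have hpos2 : (0:ℝ) < 1 + γ*(3*N) := by positivity
    rw [div_le_iff₀ (by positivity)]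
    nlinarith [hD2, hstep2, hpos2]
  · -- at most one active minimizer
    push_neg at htwo
    obtain ⟨w, hwA, hwγ⟩ := hAex
    by_cases hs : ⟪perp u, w⟫ = 0
    · -- the minimizer is parallel to u : γ ≥ 1
      obtain ⟨a, b, ha0, hb0, -, -⟩ := hint w hwA
      rw [inner_coords, ha0, hb0] at hwγ
      rw [inner_perp_left, ha0, hb0] at hs
      have hγ2 : γ^2 = (a:ℝ)^2 + (b:ℝ)^2 := by
        linear_combination (-(u 0 * a) - u 1 * b - γ) * hwγ - (u 0 * b - u 1 * a) * hs +
          ((a:ℝ)^2 + (b:ℝ)^2) * hu1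
      have hab : a ≠ 0 ∨ b ≠ 0 := by
        by_contra hc
        push_neg at hc
        rw [hc.1, hc.2] at hγ2
        simp at hγ2
        nlinarith
      have hone : (1:ℝ) ≤ (a:ℝ)^2 + (b:ℝ)^2 := by
        have : (1:ℤ) ≤ a^2 + b^2 := by
          rcases hab with h | h
          · nlinarith [Int.one_le_abs h, sq_abs a, sq_nonneg b, abs_nonneg a]
          · nlinarith [Int.one_le_abs h, sq_abs b, sq_nonneg a, abs_nonneg b]
        exact_mod_cast this
      have hγ1 : 1 ≤ γ := by nlinarith
      rw [div_le_iff₀ (by positivity)]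
      nlinarith
    · -- rotate u slightly towards decreasing the unique active value: contradiction
      exfalso
      set s : ℝ := ⟪perp u, w⟫ with hsdef
      set σ : ℝ := if 0 < s then 1 else -1 with hσdef
      have hσs : σ * s = |s| := by
        rcases lt_trichotomy 0 s with h | h | h
        · rw [hσdef, if_pos h, abs_of_pos h, one_mul]
        · exact absurd h.symm hs
        · rw [hσdef, if_neg (by linarith), abs_of_neg h]; ring
      have hσabs : |σ| = 1 := by
        rcases le_or_gt s 0 with h | h
        · rw [hσdef, if_neg (by linarith)]; simp
        · rw [hσdef, if_pos h]; simp
      set δ : ℝ := min 1 (Finset.univ.inf' Finset.univ_nonempty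
        (fun k : ι × ι => if hfun V k u < γ then γ - hfun V k u else 1)) with hδdef
      have hδpos : 0 < δ := by
        rw [hδdef]
        apply lt_min one_pos
        rw [Finset.lt_inf'_iff]
        intro k _
        by_cases hk : hfun V k u < γ
        · rw [if_pos hk]; linarith
        · rw [if_neg hk]; norm_num
      set τ : ℝ := δ / (2*N + 1) with hτdef
      have hτ : 0 < τ := by rw [hτdef]; positivity
      set r : ℝ := Real.sqrt (1 + τ^2) with hrdef
      have hr2 : r^2 = 1 + τ^2 := Real.sq_sqrt (by positivity)
      have hr1 : 1 ≤ r := by nlinarith [Real.sqrt_nonneg (1 + τ^2)]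
      have hr0 : 0 < r := by linarith
      set u' : E2 := r⁻¹ • (u - (τ*σ) • perp u) with hu'def
      have hc0 : u' 0 = r⁻¹ * (u 0 + (τ*σ) * u 1) := by
        rw [hu'def]
        simp [PiLp.smul_apply, PiLp.sub_apply, smul_eq_mul]
      have hc1 : u' 1 = r⁻¹ * (u 1 - (τ*σ) * u 0) := by
        rw [hu'def]
        simp [PiLp.smul_apply, PiLp.sub_apply, smul_eq_mul]
      have hσ2 : σ^2 = 1 := by
        have := hσabs
        nlinarith [sq_abs σ]
      have hu'mem : u' ∈ sphere (0:E2) 1 := by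
        rw [mem_sphere_iff_sumsq, hc0, hc1]
        have hrne : r ≠ 0 := hr0.ne'
        field_simp
        linear_combination (1 + (τ*σ)^2) * hu1 + τ^2 * hσ2 - hr2
      have hinner' : ∀ y : E2, ⟪u', y⟫ = r⁻¹ * (⟪u, y⟫ - (τ*σ) * ⟪perp u, y⟫) := by
        intro y
        rw [hu'def, real_inner_smul_left, inner_sub_left, real_inner_smul_left]
      have hstep : ∀ k : ι × ι, hfun V k u' < γ := by
        intro k
        obtain ⟨p, q, hpq⟩ := exists_min V k u
        set wk : E2 := V k.1 p - V k.2 q with hwkdef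
        have hle : hfun V k u' ≤ ⟪u', wk⟫ := hfun_le V k p q u'
        have hnorm : ‖wk‖ ≤ 2*N := diff_norm_le V hV k p q
        rw [hinner' wk] at hle
        by_cases hk : hfun V k u = γ
        · have hwkw : wk = w := by
            refine htwo wk w ⟨⟨k, hk, p, q, rfl⟩, ?_⟩ ⟨hwA, hwγ⟩
            rw [← hpq, hk]
          rw [hwkw] at hle
          have he : r⁻¹ * (⟪u, w⟫ - τ*σ*⟪perp u, w⟫) = r⁻¹ * (γ - τ * |s|) := by
            rw [hwγ, ← hsdef, mul_assoc, hσs]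
          rw [he] at hle
          have habs : 0 < |s| := abs_pos.2 hs
          have hlt2 : r⁻¹ * (γ - τ * |s|) < γ := by
            rw [inv_mul_eq_div, div_lt_iff₀ hr0]
            nlinarith
          linarith
        · have hlt : hfun V k u < γ :=
            lt_of_le_of_ne (by rw [hγdef]; exact hfun_le_gfun V k u) hk
          have hE : |⟪perp u, wk⟫| ≤ 2*N := by
            have h2 := abs_real_inner_le_norm (perp u) wk
            rw [norm_perp, mem_sphere_zero_iff_norm.1 hu, one_mul] at h2
            linarith
          have hδle : δ ≤ γ - hfun V k u := by
            have h1 : δ ≤ Finset.univ.inf' Finset.univ_nonempty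
                (fun k : ι × ι => if hfun V k u < γ then γ - hfun V k u else 1) :=
              min_le_right _ _
            have h2 : Finset.univ.inf' Finset.univ_nonempty
                (fun k : ι × ι => if hfun V k u < γ then γ - hfun V k u else 1) ≤
                (if hfun V k u < γ then γ - hfun V k u else 1) :=
              Finset.inf'_le _ (Finset.mem_univ k)
            rw [if_pos hlt] at h2
            linarith
          have hτN : τ * (2*N) < δ := by
            rw [hτdef, div_mul_eq_mul_div, div_lt_iff₀ (by positivity)]
            nlinarith
          have habs2 : |τ*σ*⟪perp u, wk⟫| ≤ τ*(2*N) := by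
            rw [abs_mul, abs_mul, hσabs, abs_of_pos hτ, mul_one]
            exact mul_le_mul_of_nonneg_left hE hτ.le
          have hnum : ⟪u, wk⟫ - τ*σ*⟪perp u, wk⟫ < γ := by
            have h3 := neg_abs_le (τ*σ*⟪perp u, wk⟫)
            have h4 : ⟪u, wk⟫ = hfun V k u := hpq.symm
            linarith [abs_le.1 habs2]
          rcases le_or_gt (⟪u, wk⟫ - τ*σ*⟪perp u, wk⟫) 0 with hc | hc
          · have : r⁻¹ * (⟪u, wk⟫ - τ*σ*⟪perp u, wk⟫) ≤ 0 :=
              mul_nonpos_of_nonneg_of_nonpos (by positivity) hc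
            linarith
          · have h5 : r⁻¹ ≤ 1 := inv_le_one_of_one_le₀ hr1
            have : r⁻¹ * (⟪u, wk⟫ - τ*σ*⟪perp u, wk⟫) ≤
                ⟪u, wk⟫ - τ*σ*⟪perp u, wk⟫ := by nlinarith
            linarith
      have hlt : gfun V u' < γ := by
        unfold gfun
        rw [Finset.sup'_lt_iff]
        intro k _
        exact hstep k
      have := isMinOn_iff.1 hmin u' hu'mem
      rw [← hγdef] at this
      linarith
end Family
end Stmt14
namespace Stmt14
section Family2
set_option linter.unusedSectionVars false
variable {ι : Type} [Fintype ι] [Nonempty ι] {n : ι → ℕ} (V : (i : ι) → Fin (n i + 1) → E2)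

lemma inner_isLinear (u : E2) : IsLinearMap ℝ (fun y : E2 => ⟪u, y⟫) := by
  constructor
  · intro x y; exact inner_add_right u x y
  · intro c x; exact real_inner_smul_right u x c

lemma mfun_le_of_mem {i : ι} {x : E2} (hx : x ∈ convexHull ℝ (Set.range (V i))) (u : E2) :
    mfun V i u ≤ ⟪u, x⟫ := by
  have hsub : convexHull ℝ (Set.range (V i)) ⊆ {y : E2 | mfun V i u ≤ ⟪u, y⟫} := by
    apply convexHull_min
    · rintro y ⟨p, rfl⟩
      exact Finset.inf'_le (fun p => ⟪u, V i p⟫) (Finset.mem_univ p)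
    · exact convex_halfSpace_ge (inner_isLinear u) _
  exact hsub hx

lemma le_Mfun_of_mem {i : ι} {x : E2} (hx : x ∈ convexHull ℝ (Set.range (V i))) (u : E2) :
    ⟪u, x⟫ ≤ Mfun V i u := by
  have hsub : convexHull ℝ (Set.range (V i)) ⊆ {y : E2 | ⟪u, y⟫ ≤ Mfun V i u} := by
    apply convexHull_min
    · rintro y ⟨p, rfl⟩
      exact Finset.le_sup' (fun p => ⟪u, V i p⟫) (Finset.mem_univ p)
    · exact convex_halfSpace_le (inner_isLinear u) _
  exact hsub hx

lemma hfun_le_inner_diff {u : E2} (k : ι × ι) {x y : E2}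
    (hx : x ∈ convexHull ℝ (Set.range (V k.1))) (hy : y ∈ convexHull ℝ (Set.range (V k.2))) :
    hfun V k u ≤ ⟪u, x⟫ - ⟪u, y⟫ := by
  have h1 := mfun_le_of_mem V hx u
  have h2 := le_Mfun_of_mem V hy u
  unfold hfun
  linarith

lemma exists_line_points {u : E2} (hg : gfun V u ≤ 0) :
    ∃ (t : ℝ) (x : ι → E2), (∀ i, x i ∈ convexHull ℝ (Set.range (V i))) ∧
      ∀ i, ⟪u, x i⟫ = t := by
  set t : ℝ := Finset.univ.sup' Finset.univ_nonempty (fun j : ι => mfun V j u) with htdef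
  have hex : ∀ i : ι, ∃ y, y ∈ convexHull ℝ (Set.range (V i)) ∧ ⟪u, y⟫ = t := by
    intro i
    have h1 : mfun V i u ≤ t := Finset.le_sup' (fun j : ι => mfun V j u) (Finset.mem_univ i)
    have h2 : t ≤ Mfun V i u := by
      apply Finset.sup'_le
      intro j _
      have := hfun_le_gfun V (j, i) u
      unfold hfun at this
      simp only at this
      linarith
    obtain ⟨p, -, hp⟩ := Finset.exists_mem_eq_inf' Finset.univ_nonempty
      (fun p => ⟪u, V i p⟫)
    obtain ⟨q, -, hq⟩ := Finset.exists_mem_eq_sup' Finset.univ_nonempty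
      (fun q => ⟪u, V i q⟫)
    have hcont : ContinuousOn (fun lam : ℝ => ⟪u, V i p + lam • (V i q - V i p)⟫)
        (Icc (0:ℝ) 1) := by
      apply Continuous.continuousOn
      exact continuous_const.inner (continuous_const.add (continuous_id.smul continuous_const))
    have hmem : t ∈ Icc ((fun lam : ℝ => ⟪u, V i p + lam • (V i q - V i p)⟫) 0)
        ((fun lam : ℝ => ⟪u, V i p + lam • (V i q - V i p)⟫) 1) := by
      constructor
      · simp only [zero_smul, add_zero]
        have : mfun V i u = ⟪u, V i p⟫ := hp
        linarith
      · simp only [one_smul]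
        have h3 : ⟪u, V i p + (V i q - V i p)⟫ = ⟪u, V i q⟫ := by
          congr 1
          abel
        rw [h3]
        have : Mfun V i u = ⟪u, V i q⟫ := hq
        linarith
    obtain ⟨lam, hlam, hval⟩ := intermediate_value_Icc (by norm_num : (0:ℝ) ≤ 1) hcont hmem
    refine ⟨V i p + lam • (V i q - V i p), ?_, hval⟩
    apply (convex_convexHull ℝ _).add_smul_sub_mem
    · exact subset_convexHull ℝ _ ⟨p, rfl⟩
    · exact subset_convexHull ℝ _ ⟨q, rfl⟩
    · exact hlam
  choose x hx1 hx2 using hex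
  exact ⟨t, x, hx1, hx2⟩

end Family2

lemma volume_hyperplane (u : E2) (hu : ‖u‖ = 1) (t : ℝ) :
    volume {y : E2 | ⟪u, y⟫ = t} = 0 := by
  have huu : ⟪u, u⟫ = 1 := by
    rw [real_inner_self_eq_norm_sq, hu]; norm_num
  set K : Submodule ℝ E2 := (ℝ ∙ u)ᗮ with hKdef
  set S : AffineSubspace ℝ E2 := AffineSubspace.mk' (t • u) K with hSdef
  have hset : {y : E2 | ⟪u, y⟫ = t} = (S : Set E2) := by
    ext y
    rw [mem_setOf_eq, hSdef, SetLike.mem_coe, AffineSubspace.mem_mk',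
      vsub_eq_sub, hKdef, Submodule.mem_orthogonal_singleton_iff_inner_right,
      inner_sub_right, real_inner_smul_right, huu]
    constructor <;> intro h <;> linarith
  rw [hset]
  apply Measure.addHaar_affineSubspace
  intro htop
  have hdir : S.direction = ⊤ := by rw [htop]; exact AffineSubspace.direction_top ℝ E2 E2
  rw [hSdef, AffineSubspace.direction_mk'] at hdir
  have humem : u ∈ K := by rw [hdir]; exact Submodule.mem_top
  rw [hKdef, Submodule.mem_orthogonal_singleton_iff_inner_right, huu] at humem
  norm_num at humem

end Stmt14
namespace Stmt14

lemma volume_triangle_lower {C : Set E2} (hC : Convex ℝ C) {a b e : E2}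
    (ha : a ∈ C) (hb : b ∈ C) (he : e ∈ C) :
    ENNReal.ofReal (|(b - a) 0 * (e - a) 1 - (b - a) 1 * (e - a) 0| / 4) ≤ volume C := by
  set vb : E2 := b - a with hvb
  set ve : E2 := e - a with hve
  set L : E2 →ₗ[ℝ] E2 :=
    { toFun := fun x => x 0 • vb + x 1 • ve
      map_add' := by
        intro x y
        simp only [PiLp.add_apply, add_smul]
        abel
      map_smul' := by
        intro c x
        simp only [PiLp.smul_apply, smul_eq_mul, mul_smul, RingHom.id_apply, smul_add] } with hL
  have hdet : LinearMap.det L = vb 0 * ve 1 - vb 1 * ve 0 := by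
    rw [← LinearMap.det_toMatrix (PiLp.basisFun 2 ℝ (Fin 2)) L, Matrix.det_fin_two]
    simp only [LinearMap.toMatrix_apply, PiLp.basisFun_repr, PiLp.basisFun_apply,
      hL, LinearMap.coe_mk, AddHom.coe_mk, PiLp.toLp_apply,
      PiLp.add_apply, PiLp.smul_apply, smul_eq_mul]
    simp [Pi.single_apply]
    ring
  set Sp : Set E2 :=
    (MeasurableEquiv.toLp 2 (Fin 2 → ℝ)).symm ⁻¹' (Set.univ.pi fun _ : Fin 2 => Icc (0:ℝ) 2⁻¹)
    with hSp
  have hSpvol : volume Sp = ENNReal.ofReal (1/4) := by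
    rw [hSp, (EuclideanSpace.volume_preserving_symm_measurableEquiv_toLp (Fin 2)).measure_preimage
      (MeasurableSet.univ_pi (fun _ => measurableSet_Icc)).nullMeasurableSet]
    rw [volume_pi_pi]
    simp only [Real.volume_Icc]
    rw [Fin.prod_univ_two, ← ENNReal.ofReal_mul (by norm_num)]
    norm_num
  have hcoords : ∀ x : E2, x ∈ Sp → x 0 ∈ Icc (0:ℝ) 2⁻¹ ∧ x 1 ∈ Icc (0:ℝ) 2⁻¹ := by
    intro x hx
    rw [hSp, mem_preimage, mem_pi] at hx
    exact ⟨hx 0 (mem_univ _), hx 1 (mem_univ _)⟩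
  have hsubset : (fun x => a + L x) '' Sp ⊆ C := by
    rintro - ⟨x, hx, rfl⟩
    obtain ⟨hx0, hx1⟩ := hcoords x hx
    have hL3 : a + L x = ∑ i : Fin 3, (![1 - x 0 - x 1, x 0, x 1] i) • (![a, b, e] i) := by
      rw [Fin.sum_univ_three]
      simp only [Matrix.cons_val_zero, Matrix.cons_val_one, Matrix.head_cons,
        Matrix.cons_val_two, Matrix.tail_cons]
      show a + (x 0 • vb + x 1 • ve) = (1 - x 0 - x 1) • a + x 0 • b + x 1 • e
      rw [hvb, hve]
      module
    show a + L x ∈ C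
    rw [hL3]
    apply hC.sum_mem
    · intro i _
      fin_cases i
      · simp only [Matrix.cons_val_zero]
        have := hx0.2; have := hx1.2; norm_num at *; linarith
      · simpa using hx0.1
      · simpa using hx1.1
    · rw [Fin.sum_univ_three]
      simp only [Matrix.cons_val_zero, Matrix.cons_val_one, Matrix.head_cons,
        Matrix.cons_val_two, Matrix.tail_cons]
      ring
    · intro i _
      fin_cases i <;> simpa using (by first | exact ha | exact hb | exact he)
  calc ENNReal.ofReal (|(b - a) 0 * (e - a) 1 - (b - a) 1 * (e - a) 0| / 4)
      = ENNReal.ofReal |LinearMap.det L| * volume Sp := by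
        rw [hSpvol, hdet, ← ENNReal.ofReal_mul (abs_nonneg _)]
        congr 1
        rw [hvb, hve]
        ring
    _ = volume (L '' Sp) := (Measure.addHaar_image_linearMap volume L Sp).symm
    _ = volume ((fun y => a + y) '' (L '' Sp)) := by
        rw [Set.image_add_left, measure_preimage_add]
    _ = volume ((fun x => a + L x) '' Sp) := by rw [image_image]
    _ ≤ volume C := measure_mono hsubset

end Stmt14
set_option maxHeartbeats 1000000 in
theorem stmt14 : ∃ c : ℝ, 0 < c ∧ ∀ N : ℕ, 0 < N →
    ∀ (ι : Type) (_ : Fintype ι) (n : ι → ℕ) (V : (i : ι) → Fin (n i + 1) → E2),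
    (∀ i j, isGrid N (V i j)) →
    ∀ F : Finset E2,
    (∀ i, (convexHull ℝ (↑F : Set E2) ∩ convexHull ℝ (Set.range (V i))).Nonempty) →
    (∀ F' : Finset E2,
      (∀ i, (convexHull ℝ (↑F' : Set E2) ∩ convexHull ℝ (Set.range (V i))).Nonempty) →
      volume (convexHull ℝ (↑F : Set E2)) ≤ volume (convexHull ℝ (↑F' : Set E2))) →
    volume (convexHull ℝ (↑F : Set E2)) ≠ 0 →
    ENNReal.ofReal (c / (N : ℝ) ^ 8) ≤ volume (convexHull ℝ (↑F : Set E2)) := by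
  classical
  refine ⟨1/72, by norm_num, ?_⟩
  intro N hN ι instF n V hV F hFint hFmin hFvol
  letI := instF
  rcases isEmpty_or_nonempty ι with hempty | hne
  · exfalso
    have h0 := hFmin ∅ (fun i => (hempty.elim i))
    rw [Finset.coe_empty, convexHull_empty, measure_empty] at h0
    exact hFvol (le_antisymm h0 zero_le)
  have hN1 : 1 ≤ N := hN
  have hNR : (1:ℝ) ≤ (N:ℝ) := by exact_mod_cast hN1
  -- the gap function is positive on the sphere (otherwise a measure-zero transversal exists)
  have hpos : ∀ u ∈ sphere (0:E2) 1, 0 < Stmt14.gfun V u := by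
    intro u hu
    by_contra hle
    push_neg at hle
    obtain ⟨t, x, hx1, hx2⟩ := Stmt14.exists_line_points V hle
    set F' : Finset E2 := Finset.image x Finset.univ with hF'
    have hmeets : ∀ i, (convexHull ℝ (↑F' : Set E2) ∩
        convexHull ℝ (Set.range (V i))).Nonempty := by
      intro i
      refine ⟨x i, ?_, hx1 i⟩
      apply subset_convexHull
      simp [hF']
    have hsub : convexHull ℝ (↑F' : Set E2) ⊆ {y : E2 | ⟪u, y⟫ = t} := by
      apply convexHull_min
      · intro y hy
        simp only [hF', Finset.coe_image, Finset.coe_univ, Set.image_univ] at hy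
        obtain ⟨i, rfl⟩ := hy
        exact hx2 i
      · exact convex_hyperplane (Stmt14.inner_isLinear u) t
    have hzero : volume (convexHull ℝ (↑F' : Set E2)) = 0 :=
      measure_mono_null hsub (Stmt14.volume_hyperplane u (mem_sphere_zero_iff_norm.1 hu) t)
    have h0 := hFmin F' hmeets
    rw [hzero] at h0
    exact hFvol (le_antisymm h0 zero_le)
  have hglow := Stmt14.gfun_lower V hN1 hV hpos
  set η : ℝ := 1 / (3 * N) with hη
  have hηpos : 0 < η := by rw [hη]; positivity
  choose X hX using hFint
  have hXF : ∀ i, X i ∈ convexHull ℝ (↑F : Set E2) := fun i => (hX i).1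
  have hXO : ∀ i, X i ∈ convexHull ℝ (Set.range (V i)) := fun i => (hX i).2
  -- first direction : e1
  set e1 : E2 := EuclideanSpace.single 0 1 with he1
  have he1s : e1 ∈ sphere (0:E2) 1 := by
    rw [mem_sphere_zero_iff_norm, he1, EuclideanSpace.norm_single]; norm_num
  have h1 := hglow e1 he1s
  obtain ⟨k, hk⟩ := Stmt14.exists_active V e1
  have hba : η ≤ ⟪e1, X k.1⟫ - ⟪e1, X k.2⟫ := by
    have hd := Stmt14.hfun_le_inner_diff V (u := e1) k (hXO k.1) (hXO k.2)
    rw [hη]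
    rw [hk] at h1
    linarith
  set b : E2 := X k.1 with hbdef
  set a : E2 := X k.2 with hadef
  set vb : E2 := b - a with hvbdef
  have hvb0 : η ≤ vb 0 := by
    have hco : ∀ y : E2, ⟪e1, y⟫ = y 0 := by
      intro y
      rw [Stmt14.inner_coords, he1]
      simp [EuclideanSpace.single_apply]
    rw [hvbdef, PiLp.sub_apply]
    rw [hco, hco] at hba
    exact hba
  have hnb : η ≤ ‖vb‖ := by
    have h2 := Stmt14.normsq_coords vb
    nlinarith [norm_nonneg vb, sq_nonneg (vb 1)]
  have hnvb : 0 < ‖vb‖ := lt_of_lt_of_le hηpos hnb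
  -- second direction : unit normal to vb
  set u2 : E2 := ‖vb‖⁻¹ • Stmt14.perp vb with hu2def
  have hu2s : u2 ∈ sphere (0:E2) 1 := by
    rw [mem_sphere_zero_iff_norm, hu2def, norm_smul, Stmt14.norm_perp, norm_inv,
      Real.norm_eq_abs, abs_of_pos hnvb]
    exact inv_mul_cancel₀ hnvb.ne'
  have h2 := hglow u2 hu2s
  obtain ⟨k', hk'⟩ := Stmt14.exists_active V u2
  have hccdd : η ≤ ⟪u2, X k'.1⟫ - ⟪u2, X k'.2⟫ := by
    have hd := Stmt14.hfun_le_inner_diff V (u := u2) k' (hXO k'.1) (hXO k'.2)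
    rw [hη]
    rw [hk'] at h2
    linarith
  obtain ⟨ept, heptF, hept⟩ : ∃ y, y ∈ convexHull ℝ (↑F : Set E2) ∧ η/2 ≤ |⟪u2, y - a⟫| := by
    by_cases hcase : η/2 ≤ |⟪u2, X k'.1 - a⟫|
    · exact ⟨X k'.1, hXF k'.1, hcase⟩
    · refine ⟨X k'.2, hXF k'.2, ?_⟩
      push_neg at hcase
      have hsub2 : ⟪u2, X k'.1 - a⟫ - ⟪u2, X k'.2 - a⟫ = ⟪u2, X k'.1⟫ - ⟪u2, X k'.2⟫ := by
        rw [inner_sub_right, inner_sub_right]; ring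
      have h5 := abs_lt.1 hcase
      apply le_abs.2; right
      rw [inner_sub_right]
      rw [inner_sub_right] at h5
      linarith
  -- determinant lower bound
  have hip : ⟪u2, ept - a⟫ = ‖vb‖⁻¹ * (vb 0 * (ept - a) 1 - vb 1 * (ept - a) 0) := by
    rw [hu2def, real_inner_smul_left, Stmt14.inner_perp_left]
  have habs : |⟪u2, ept - a⟫| = ‖vb‖⁻¹ * |vb 0 * (ept - a) 1 - vb 1 * (ept - a) 0| := by
    rw [hip, abs_mul, abs_inv, abs_of_pos hnvb]
  have hDlow : η * (η/2) ≤ |vb 0 * (ept - a) 1 - vb 1 * (ept - a) 0| := by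
    have h7 := hept
    rw [habs] at h7
    have h9 : ‖vb‖ * ‖vb‖⁻¹ = 1 := mul_inv_cancel₀ hnvb.ne'
    nlinarith [abs_nonneg (vb 0 * (ept - a) 1 - vb 1 * (ept - a) 0)]
  -- conclude via the parallelogram lemma
  have htri := Stmt14.volume_triangle_lower (convex_convexHull ℝ (↑F : Set E2))
    (hXF k.2) (hXF k.1) heptF
  refine le_trans ?_ htri
  apply ENNReal.ofReal_le_ofReal
  have hσ : (b - a) 0 * (ept - a) 1 - (b - a) 1 * (ept - a) 0
      = vb 0 * (ept - a) 1 - vb 1 * (ept - a) 0 := by rw [hvbdef]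
  rw [hσ]
  have hN8 : (N:ℝ)^2 ≤ (N:ℝ)^8 := by
    calc (N:ℝ)^2 = (N:ℝ)^2 * 1 := by ring
    _ ≤ (N:ℝ)^2 * (N:ℝ)^6 := by
        apply mul_le_mul_of_nonneg_left _ (by positivity)
        exact one_le_pow₀ hNR
    _ = (N:ℝ)^8 := by ring
  have hη2 : η * (η/2) = 1/(18*(N:ℝ)^2) := by
    rw [hη]
    field_simp
    ring
  have h10 : (1:ℝ)/72/(N:ℝ)^8 ≤ 1/(72*(N:ℝ)^2) := by
    rw [div_div]
    apply one_div_le_one_div_of_le (by positivity)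
    nlinarith
  have h11 : (1:ℝ)/(72*(N:ℝ)^2) = (η * (η/2))/4 := by rw [hη2]; ring
  calc (1:ℝ)/72/(N:ℝ)^8 ≤ 1/(72*(N:ℝ)^2) := h10
  _ = (η * (η/2))/4 := h11
  _ ≤ |vb 0 * (ept - a) 1 - vb 1 * (ept - a) 0| / 4 := by linarith
end
end

section
/- Let E be an ellipse in ℝ² of minimum area containing a finite point set Q ⊆ ℝ² whose convex hull has positive area. Then the ellipse E' obtained by scaling E by factor 1/2 about its center is contained in the convex hull of Q. -/
set_option maxHeartbeats 4000000

open MeasureTheory Metric Set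
open RealInnerProductSpace
noncomputable section

def perp (u : E2) : E2 := WithLp.toLp 2 ![-(u 1), u 0]

lemma inner_e2 (u w : E2) : ⟪u, w⟫ = u 0 * w 0 + u 1 * w 1 := by
  simp [PiLp.inner_apply, Fin.sum_univ_two, RCLike.inner_apply, conj_trivial]; ring

lemma perp0 (u : E2) : perp u 0 = -(u 1) := rfl
lemma perp1 (u : E2) : perp u 1 = u 0 := rfl

lemma span2 (u w : E2) (hu : u 0 ^2 + u 1 ^2 = 1) :
    w = ⟪u,w⟫ • u + ⟪perp u, w⟫ • perp u := by
  ext i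
  fin_cases i
  · show w 0 = (⟪u,w⟫ • u + ⟪perp u, w⟫ • perp u) 0
    simp only [inner_e2, perp0, perp1, PiLp.add_apply, PiLp.smul_apply, smul_eq_mul]
    linear_combination (-(w 0)) * hu
  · show w 1 = (⟪u,w⟫ • u + ⟪perp u, w⟫ • perp u) 1
    simp only [inner_e2, perp0, perp1, PiLp.add_apply, PiLp.smul_apply, smul_eq_mul]
    linear_combination (-(w 1)) * hu

lemma inner_uu (u : E2) (hu : u 0 ^2 + u 1 ^2 = 1) : ⟪u, u⟫ = 1 := by
  rw [inner_e2]; nlinarith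
lemma inner_uperp (u : E2) : ⟪u, perp u⟫ = 0 := by
  rw [inner_e2, perp0, perp1]; ring
lemma inner_perpu (u : E2) : ⟪perp u, u⟫ = 0 := by
  rw [inner_e2, perp0, perp1]; ring
lemma inner_pp (u : E2) (hu : u 0 ^2 + u 1 ^2 = 1) : ⟪perp u, perp u⟫ = 1 := by
  rw [inner_e2, perp0, perp1]; nlinarith

lemma normsq_coord (z : E2) : ‖z‖^2 = z 0 ^2 + z 1 ^2 := by
  rw [← real_inner_self_eq_norm_sq, inner_e2]; ring

lemma normsq_combo (u : E2) (hu : u 0 ^2 + u 1 ^2 = 1) (p q : ℝ) :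
    ‖p • u + q • perp u‖^2 = p^2 + q^2 := by
  rw [normsq_coord]
  simp only [PiLp.add_apply, PiLp.smul_apply, smul_eq_mul, perp0, perp1]
  linear_combination (p^2 + q^2) * hu

lemma lagrange (u w : E2) (hu : u 0 ^2 + u 1 ^2 = 1) :
    ⟪u,w⟫^2 + ⟪perp u, w⟫^2 = ‖w‖^2 := by
  rw [normsq_coord, inner_e2, inner_e2, perp0, perp1]
  linear_combination (w 0^2 + w 1^2) * hu

def Dlin (u : E2) (a b : ℝ) : E2 →ₗ[ℝ] E2 where
  toFun w := (a * ⟪u,w⟫) • u + (b * ⟪perp u,w⟫) • perp u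
  map_add' x y := by
    simp only [inner_add_right, mul_add, add_smul]; module
  map_smul' c x := by
    simp only [real_inner_smul_right, RingHom.id_apply, smul_smul]
    module

lemma Dlin_apply (u : E2) (a b : ℝ) (w : E2) :
    Dlin u a b w = (a * ⟪u,w⟫) • u + (b * ⟪perp u,w⟫) • perp u := rfl

lemma Dlin_det (u : E2) (hu : u 0 ^2 + u 1 ^2 = 1) (a b : ℝ) :
    LinearMap.det (Dlin u a b) = a * b := by
  rw [← LinearMap.det_toMatrix (EuclideanSpace.basisFun (Fin 2) ℝ).toBasis]
  rw [Matrix.det_fin_two]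
  simp only [LinearMap.toMatrix_apply, OrthonormalBasis.coe_toBasis,
    OrthonormalBasis.coe_toBasis_repr_apply, EuclideanSpace.basisFun_repr,
    EuclideanSpace.basisFun_apply, Dlin, LinearMap.coe_mk, AddHom.coe_mk,
    PiLp.add_apply, PiLp.smul_apply, smul_eq_mul, inner_e2, perp0, perp1,
    EuclideanSpace.single_apply]
  norm_num
  linear_combination (a*b*(u 0 ^2 + u 1 ^2 + 1)) * hu

lemma Dlin_comp (u : E2) (hu : u 0 ^2 + u 1 ^2 = 1) (a b a' b' : ℝ) (w : E2) :
    Dlin u a b (Dlin u a' b' w)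
      = (a * a' * ⟪u,w⟫) • u + (b * b' * ⟪perp u,w⟫) • perp u := by
  rw [Dlin_apply, Dlin_apply]
  rw [inner_add_right, inner_add_right, real_inner_smul_right, real_inner_smul_right,
    real_inner_smul_right, real_inner_smul_right, inner_uu u hu, inner_uperp,
    inner_perpu, inner_pp u hu]
  module

def Deq (u : E2) (hu : u 0 ^2 + u 1 ^2 = 1) (a b : ℝ) (ha : a ≠ 0) (hb : b ≠ 0) :
    E2 ≃ₗ[ℝ] E2 :=
  LinearEquiv.ofLinear (Dlin u a b) (Dlin u a⁻¹ b⁻¹)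
    (by
      apply LinearMap.ext; intro w
      simp only [LinearMap.comp_apply, LinearMap.id_apply]
      rw [Dlin_comp u hu, mul_inv_cancel₀ ha, mul_inv_cancel₀ hb, one_mul, one_mul]
      exact (span2 u w hu).symm)
    (by
      apply LinearMap.ext; intro w
      simp only [LinearMap.comp_apply, LinearMap.id_apply]
      rw [Dlin_comp u hu, inv_mul_cancel₀ ha, inv_mul_cancel₀ hb, one_mul, one_mul]
      exact (span2 u w hu).symm)

lemma Deq_apply (u : E2) (hu : u 0 ^2 + u 1 ^2 = 1) (a b : ℝ) (ha : a ≠ 0) (hb : b ≠ 0)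
    (w : E2) : Deq u hu a b ha hb w = Dlin u a b w := rfl

lemma Deq_toAffine_linear (u : E2) (hu : u 0 ^2 + u 1 ^2 = 1) (a b : ℝ) (ha : a ≠ 0)
    (hb : b ≠ 0) : (Deq u hu a b ha hb).toAffineEquiv.linear = Deq u hu a b ha hb := rfl

lemma affine_linear_trans (e e' : E2 ≃ᵃ[ℝ] E2) :
    (e.trans e').linear = e.linear.trans e'.linear := rfl

lemma vol_affine_image (A : E2 ≃ᵃ[ℝ] E2) (s : Set E2) :
    volume ((A : E2 → E2) '' s)
      = ENNReal.ofReal |LinearMap.det (A.linear : E2 →ₗ[ℝ] E2)| * volume s := by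
  have hdec : (A : E2 → E2) '' s
      = (fun x => A 0 + x) '' ((A.linear : E2 →ₗ[ℝ] E2) '' s) := by
    rw [← Set.image_comp]
    apply Set.image_congr
    intro x _
    have h := congrFun A.toAffineMap.decomp x
    simp only [AffineEquiv.coe_toAffineMap, Pi.add_apply, Function.const_apply,
      AffineEquiv.linear_toAffineMap] at h
    show A x = A 0 + A.linear x
    rw [h]; exact add_comm _ _
  rw [hdec, Set.image_add_left, measure_preimage_add, Measure.addHaar_image_linearMap]

lemma affine_decomp (A : E2 ≃ᵃ[ℝ] E2) (x : E2) : A x = A 0 + A.linear x := by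
  have h := congrFun A.toAffineMap.decomp x
  simp only [AffineEquiv.coe_toAffineMap, Pi.add_apply, Function.const_apply,
    AffineEquiv.linear_toAffineMap] at h
  rw [show (A x : E2) = A.toAffineMap x from rfl] at *
  rw [h]; exact add_comm _ _

lemma keypoly (β x y : ℝ) (hβ0 : 0 ≤ β) (hβ : β < 1/2)
    (hx : x ≤ β) (hxy : x^2 + y^2 ≤ 1) :
    (x + (1-2*β)/8)^2 * (1+(1-2*β)/8)^2 + y^2 * (1-(1-2*β)/8)^2
      ≤ (1-(1-2*β)/8)^2 * (1+(1-2*β)/8)^2 := by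
  set t : ℝ := (1-2*β)/8 with hts
  have ht0 : 0 ≤ t := by rw [hts]; linarith
  have hx1 : -1 ≤ x := by nlinarith [sq_nonneg y]
  have hA : 0 ≤ (1 - x^2 - y^2) * (1-t)^2 :=
    mul_nonneg (by linarith) (sq_nonneg _)
  have hB : 0 ≤ 4*t*(x+1)*(β-x) := by
    have := mul_nonneg (mul_nonneg ht0 (by linarith : (0:ℝ) ≤ x+1)) (by linarith : (0:ℝ) ≤ β - x)
    linarith
  have hC : 0 ≤ 4*t*(x+1)*(t*(6-t)/2) := by
    have h6 : (0:ℝ) ≤ 6 - t := by rw [hts]; linarith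
    have := mul_nonneg (mul_nonneg (mul_nonneg ht0 (by linarith : (0:ℝ) ≤ x+1)) ht0) h6
    linarith
  have hkey : (1-t)^2*(1+t)^2 - (x+t)^2*(1+t)^2 - y^2*(1-t)^2
      = (1 - x^2 - y^2)*(1-t)^2 + 4*t*(x+1)*(β-x) + 4*t*(x+1)*(t*(6-t)/2) := by
    rw [hts]; ring
  linarith [hkey, hA, hB, hC]

/-- Planar case of John's theorem for the minimum-area circumscribed ellipse:
ellipses are affine images of the closed unit disk. -/
theorem stmt15 (Q : Finset E2) (hQ : volume (convexHull ℝ (↑Q : Set E2)) ≠ 0)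
    (L : E2 ≃ᵃ[ℝ] E2)
    (hcontain : (↑Q : Set E2) ⊆ (L : E2 → E2) '' closedBall (0 : E2) 1)
    (hmin : ∀ L' : E2 ≃ᵃ[ℝ] E2,
      (↑Q : Set E2) ⊆ (L' : E2 → E2) '' closedBall (0 : E2) 1 →
      volume ((L : E2 → E2) '' closedBall (0 : E2) 1) ≤
        volume ((L' : E2 → E2) '' closedBall (0 : E2) 1)) :
    (AffineMap.homothety (L 0) (1 / 2 : ℝ)) '' ((L : E2 → E2) '' closedBall (0 : E2) 1) ⊆
      convexHull ℝ (↑Q : Set E2) := by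
  -- setup
  have hQne : (↑Q : Set E2).Nonempty := by
    by_contra h
    rw [Set.not_nonempty_iff_eq_empty] at h
    rw [h] at hQ
    simp at hQ
  rintro p ⟨x, ⟨z0, hz0, rfl⟩, rfl⟩
  set z : E2 := (1/2 : ℝ) • z0 with hzdef
  clear_value z
  have hpz : AffineMap.homothety (L 0) (1/2 : ℝ) (L z0) = L z := by
    rw [AffineMap.homothety_apply]
    have hl : L.linear z = (1/2 : ℝ) • L.linear z0 := by
      rw [hzdef]; exact L.linear.map_smul _ _
    rw [affine_decomp L z, affine_decomp L z0, hl]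
    simp only [vsub_eq_sub, vadd_eq_add]
    module
  rw [hpz]
  have hz0n : ‖z0‖ ≤ 1 := by rwa [mem_closedBall, dist_zero_right] at hz0
  have hznorm : ‖z‖ ≤ 1/2 := by
    rw [hzdef, norm_smul]
    have h12 : ‖(1/2 : ℝ)‖ = 1/2 := by norm_num
    rw [h12]
    linarith
  by_contra hnot
  -- separation
  have hconv : Convex ℝ (convexHull ℝ (↑Q : Set E2)) := convex_convexHull ℝ _
  have hclosed : IsClosed (convexHull ℝ (↑Q : Set E2)) :=
    (Q.finite_toSet).isClosed_convexHull ℝ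
  obtain ⟨f, r, hfr, hrz⟩ := geometric_hahn_banach_closed_point hconv hclosed hnot
  -- the linear functional pulled back
  set φ : E2 →L[ℝ] ℝ :=
    f.comp (LinearMap.toContinuousLinearMap (L.linear : E2 →ₗ[ℝ] E2)) with hφ
  set v : E2 := (InnerProductSpace.toDual ℝ E2).symm φ with hv
  clear_value v
  have hvw : ∀ w : E2, ⟪v, w⟫ = f (L.linear w) := by
    intro w
    rw [hv, InnerProductSpace.toDual_symm_apply]
    rfl
  have hfL : ∀ w : E2, f (L w) = f (L 0) + ⟪v, w⟫ := by
    intro w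
    rw [hvw, affine_decomp L w, map_add]
  -- v ≠ 0
  obtain ⟨q0, hq0⟩ := hQne
  have hq0r : f q0 < r := hfr q0 (subset_convexHull ℝ _ hq0)
  have hvne : v ≠ 0 := by
    intro h0
    have h1 := hfL z
    have h2 := hfL (L.symm q0)
    rw [h0, inner_zero_left] at h1 h2
    rw [AffineEquiv.apply_symm_apply] at h2
    rw [h1] at hrz
    rw [h2] at hq0r
    linarith
  have hvpos : 0 < ‖v‖ := norm_pos_iff.mpr hvne
  set u : E2 := ‖v‖⁻¹ • v with hudef
  clear_value u
  have hunorm : ‖u‖ = 1 := by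
    rw [hudef, norm_smul, norm_inv, norm_norm, inv_mul_cancel₀ hvpos.ne']
  have hu : u 0 ^2 + u 1 ^2 = 1 := by
    have := normsq_coord u
    rw [hunorm] at this
    nlinarith [this]
  -- the bound β
  set β1 : ℝ := (r - f (L 0)) / ‖v‖ with hβ1
  clear_value β1
  set β : ℝ := max β1 0 with hβdef
  clear_value β
  have hβ0 : 0 ≤ β := by rw [hβdef]; exact le_max_right _ _
  have huz : ⟪u, z⟫ ≤ 1/2 := by
    calc ⟪u, z⟫ ≤ ‖u‖ * ‖z‖ := real_inner_le_norm u z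
    _ ≤ 1 * (1/2) := by rw [hunorm]; linarith [hznorm]
    _ = 1/2 := by norm_num
  have hβ1lt : β1 < 1/2 := by
    have h1 : r - f (L 0) < ⟪v, z⟫ := by
      have := hfL z
      linarith
    have h2 : ⟪u, z⟫ = ‖v‖⁻¹ * ⟪v, z⟫ := by
      rw [hudef, real_inner_smul_left]
    have heq : ⟪v, z⟫ = ‖v‖ * ⟪u, z⟫ := by
      rw [h2]; field_simp
    have h3 : ‖v‖ * ⟪u, z⟫ ≤ ‖v‖ * (1/2) :=
      mul_le_mul_of_nonneg_left huz (norm_nonneg v)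
    rw [hβ1, div_lt_iff₀ hvpos]
    nlinarith [h1, heq, h3]
  have hβlt : β < 1/2 := by
    rw [hβdef]; exact max_lt hβ1lt (by norm_num)
  have hwq : ∀ q ∈ Q, ‖L.symm q‖ ≤ 1 ∧ ⟪u, L.symm q⟫ ≤ β := by
    intro q hq
    obtain ⟨w, hwB, hwq⟩ := hcontain hq
    have hsymm : L.symm q = w := by rw [← hwq, AffineEquiv.symm_apply_apply]
    constructor
    · rw [hsymm]; rwa [mem_closedBall, dist_zero_right] at hwB
    · have hfq : f q < r := hfr q (subset_convexHull ℝ _ hq)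
      have h1 : f (L (L.symm q)) = f (L 0) + ⟪v, L.symm q⟫ := hfL _
      rw [AffineEquiv.apply_symm_apply] at h1
      have h2 : ⟪v, L.symm q⟫ < r - f (L 0) := by linarith
      have h3 : ⟪u, L.symm q⟫ = ‖v‖⁻¹ * ⟪v, L.symm q⟫ := by
        rw [hudef, real_inner_smul_left]
      have h4 : ⟪u, L.symm q⟫ ≤ β1 := by
        rw [h3, hβ1]
        rw [div_eq_inv_mul]
        have := mul_le_mul_of_nonneg_left h2.le (inv_pos.mpr hvpos).le
        exact this
      exact h4.trans (by rw [hβdef]; exact le_max_left _ _)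
  -- parameters
  set t : ℝ := (1 - 2*β)/8 with htdef
  clear_value t
  have ht0 : 0 < t := by rw [htdef]; linarith
  have ht8 : t ≤ 1/8 := by rw [htdef]; linarith
  set a : ℝ := 1 - t with hadef
  clear_value a
  set b : ℝ := 1 + t with hbdef
  clear_value b
  have ha0 : 0 < a := by rw [hadef]; linarith
  have hb0 : 0 < b := by rw [hbdef]; linarith
  -- the smaller ellipse
  set D := Deq u hu a b ha0.ne' hb0.ne' with hD
  clear_value D
  set M : E2 ≃ᵃ[ℝ] E2 :=
    (D.toAffineEquiv.trans (AffineEquiv.constVAdd ℝ E2 ((-t) • u))).trans L with hM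
  clear_value M
  have hMapp : ∀ w : E2, (M : E2 → E2) w = L ((-t) • u + Dlin u a b w) := by
    intro w
    rw [hM]
    rw [AffineEquiv.trans_apply, AffineEquiv.trans_apply, AffineEquiv.constVAdd_apply,
      vadd_eq_add]
    have hDw : D.toAffineEquiv w = Dlin u a b w := by
      rw [show D.toAffineEquiv w = D w from congrFun (LinearEquiv.coe_toAffineEquiv D) w,
        hD, Deq_apply]
    rw [hDw]
  -- Q ⊆ M '' B
  have hQM : (↑Q : Set E2) ⊆ (M : E2 → E2) '' closedBall (0 : E2) 1 := by
    intro q hq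
    obtain ⟨hn1, hβq⟩ := hwq q hq
    set wq : E2 := L.symm q with hwqdef
    clear_value wq
    set zq : E2 := Dlin u a⁻¹ b⁻¹ (wq + t • u) with hzq
    clear_value zq
    refine ⟨zq, ?_, ?_⟩
    · -- ‖zq‖ ≤ 1
      rw [mem_closedBall, dist_zero_right]
      set X : ℝ := ⟪u, wq⟫ with hX
      clear_value X
      set Y : ℝ := ⟪perp u, wq⟫ with hY
      clear_value Y
      have hiu : ⟪u, wq + t • u⟫ = X + t := by
        rw [hX, inner_add_right, real_inner_smul_right, inner_uu u hu]; ring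
      have hip : ⟪perp u, wq + t • u⟫ = Y := by
        rw [hY, inner_add_right, real_inner_smul_right, inner_perpu]; ring
      have hz2 : ‖zq‖^2 = (a⁻¹ * (X + t))^2 + (b⁻¹ * Y)^2 := by
        rw [hzq, Dlin_apply, hiu, hip, normsq_combo u hu]
      have hXY : X^2 + Y^2 ≤ 1 := by
        rw [hX, hY]
        nlinarith [hn1, norm_nonneg wq, lagrange u wq hu]
      have hpoly := keypoly β X Y hβ0 hβlt hβq hXY
      have hfrac : (a⁻¹ * (X + t))^2 + (b⁻¹ * Y)^2
          = ((X + t)^2 * b^2 + Y^2 * a^2) / (a^2 * b^2) := by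
        field_simp
        try ring
      have hle1 : ‖zq‖^2 ≤ 1 := by
        have habpos : (0:ℝ) < a^2 * b^2 := mul_pos (pow_pos ha0 2) (pow_pos hb0 2)
        rw [hz2, hfrac, div_le_one habpos]
        calc (X + t)^2 * b^2 + Y^2 * a^2
            = (X + (1-2*β)/8)^2 * (1+(1-2*β)/8)^2 + Y^2 * (1-(1-2*β)/8)^2 := by
              simp only [hadef, hbdef, htdef]
          _ ≤ (1-(1-2*β)/8)^2 * (1+(1-2*β)/8)^2 := hpoly
          _ = a^2 * b^2 := by simp only [hadef, hbdef, htdef]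
      nlinarith [norm_nonneg zq, hle1]
    · -- M zq = q
      rw [hMapp]
      have hcomp : Dlin u a b zq = wq + t • u := by
        rw [hzq, Dlin_comp u hu, mul_inv_cancel₀ ha0.ne', mul_inv_cancel₀ hb0.ne',
          one_mul, one_mul]
        exact (span2 u _ hu).symm
      rw [hcomp]
      have : (-t) • u + (wq + t • u) = wq := by
        module
      rw [this, hwqdef, AffineEquiv.apply_symm_apply]
  -- volume comparison
  have hdetL : LinearMap.det ((L.linear : E2 ≃ₗ[ℝ] E2) : E2 →ₗ[ℝ] E2) ≠ 0 :=
    LinearEquiv.isUnit_det' _ |>.ne_zero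
  have hMlin : ((M.linear : E2 ≃ₗ[ℝ] E2) : E2 →ₗ[ℝ] E2)
      = ((L.linear : E2 ≃ₗ[ℝ] E2) : E2 →ₗ[ℝ] E2).comp (Dlin u a b) := by
    apply LinearMap.ext
    intro w
    simp only [LinearMap.comp_apply, LinearEquiv.coe_coe]
    have hcv : (AffineEquiv.constVAdd ℝ E2 ((-t) • u)).linear = LinearEquiv.refl ℝ E2 := rfl
    rw [hM, affine_linear_trans, LinearEquiv.trans_apply, affine_linear_trans,
      LinearEquiv.trans_apply, hcv, LinearEquiv.refl_apply]
    congr 1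
    rw [hD, Deq_toAffine_linear, Deq_apply]
  have hdetM : LinearMap.det ((M.linear : E2 ≃ₗ[ℝ] E2) : E2 →ₗ[ℝ] E2)
      = LinearMap.det ((L.linear : E2 ≃ₗ[ℝ] E2) : E2 →ₗ[ℝ] E2) * (a * b) := by
    rw [hMlin, LinearMap.det_comp, Dlin_det u hu]
  have hvol := hmin M hQM
  rw [vol_affine_image, vol_affine_image, hdetM] at hvol
  have hballpos : 0 < volume (closedBall (0 : E2) 1) :=
    measure_closedBall_pos volume 0 one_pos
  have hballfin : volume (closedBall (0 : E2) 1) < ⊤ :=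
    measure_closedBall_lt_top
  set dL : ℝ := LinearMap.det ((L.linear : E2 ≃ₗ[ℝ] E2) : E2 →ₗ[ℝ] E2) with hdL
  clear_value dL
  have hdLpos : 0 < |dL| := abs_pos.mpr hdetL
  have hab1 : a * b < 1 := by rw [hadef, hbdef]; nlinarith
  have habs : |dL * (a*b)| = |dL| * (a*b) := by
    rw [abs_mul, abs_of_pos (by positivity : (0:ℝ) < a*b)]
  rw [habs] at hvol
  have hlt : ENNReal.ofReal (|dL| * (a*b)) * volume (closedBall (0:E2) 1)
      < ENNReal.ofReal |dL| * volume (closedBall (0:E2) 1) := by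
    refine ENNReal.mul_lt_mul_left hballpos.ne' hballfin.ne ?_
    refine (ENNReal.ofReal_lt_ofReal_iff_of_nonneg (by positivity)).mpr ?_
    nlinarith
  exact absurd hvol (not_le.mpr hlt)
end
end

section
/- Let s and t be points in ℝ², and P₁, …, P_k a sequence of (possibly unbounded) closed convex sets in ℝ². Then there is a unique shortest polygonal path from s to t visiting P₁, …, P_k in order, i.e., a unique path π minimizing length among paths for which there exist points qᵢ ∈ Pᵢ appearing along π in order of index. -/
open MeasureTheory Metric Set unitInterval
noncomputable section

/-- A path visits the convex sets `P 1, …, P k` in order. -/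
def VisitsInOrder {s t : E2} (γ : Path s t) {k : ℕ} (P : Fin k → Set E2) : Prop :=
  ∃ q : Fin k → unitInterval, Monotone q ∧ ∀ i, γ (q i) ∈ P i

/-- Length of a path, as its total variation. -/
def pathLen {s t : E2} (γ : Path s t) : ENNReal :=
  eVariationOn (fun x : unitInterval => γ x) Set.univ


namespace StmtAux


/-- length of the polygonal chain `a :: l ++ [b]`. -/
def chainLen : E2 → List E2 → E2 → ℝ
  | a, [], b => dist a b
  | a, c :: l, b => dist a c + chainLen c l b

/-- the union of segments of the polygonal chain `a :: l ++ [b]`. -/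
def chainSet : E2 → List E2 → E2 → Set E2
  | a, [], b => segment ℝ a b
  | a, c :: l, b => segment ℝ a c ∪ chainSet c l b

lemma chainLen_nonneg : ∀ (l : List E2) (a b : E2), 0 ≤ chainLen a l b
  | [], a, b => dist_nonneg
  | c :: l, a, b => add_nonneg dist_nonneg (chainLen_nonneg l c b)

lemma chainLen_le_cons (l : List E2) (x y b : E2) :
    chainLen x l b ≤ dist x y + chainLen y l b := by
  cases l with
  | nil => simpa [chainLen] using dist_triangle x y b
  | cons c l =>
      simp only [chainLen]
      have := dist_triangle x y c
      linarith

/-- feasibility of a chain w.r.t. a list of sets -/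
def Feas (l : List E2) (Ps : List (Set E2)) : Prop := List.Forall₂ (· ∈ ·) l Ps

def IsMinChain (s t : E2) (Ps : List (Set E2)) (l : List E2) : Prop :=
  Feas l Ps ∧ ∀ m, Feas m Ps → chainLen s l t ≤ chainLen s m t

lemma midList_feas : ∀ {l m : List E2} {Ps : List (Set E2)},
    (∀ S ∈ Ps, Convex ℝ S) → Feas l Ps → Feas m Ps →
    Feas (List.zipWith (fun x y => midpoint ℝ x y) l m) Ps := by
  intro l m Ps hc hl hm
  induction hl generalizing m with
  | nil => cases hm; exact List.Forall₂.nil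
  | @cons a S l Ps' haS hlP ih =>
      cases hm with
      | cons hbS hmP =>
          refine List.Forall₂.cons ?_ (ih (fun S hS => hc S (by simp [hS])) hmP)
          have hconv := hc S (by simp)
          exact hconv.segment_subset haS hbS (midpoint_mem_segment _ _)

lemma chainLen_midpoint_le (t : E2) : ∀ (l m : List E2), l.length = m.length →
    ∀ (x y : E2), chainLen (midpoint ℝ x y) (List.zipWith (fun u v => midpoint ℝ u v) l m) t
      ≤ (chainLen x l t + chainLen y m t) / 2 := by
  intro l
  induction l with
  | nil =>
      intro m hm x y
      cases m with
      | nil =>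
          simp only [chainLen, List.zipWith]
          calc dist (midpoint ℝ x y) t = dist (midpoint ℝ x y) (midpoint ℝ t t) := by
                simp [midpoint_self]
            _ ≤ (dist x t + dist y t) / 2 := dist_midpoint_midpoint_le _ _ _ _
      | cons c m => simp at hm
  | cons a l ih =>
      intro m hm x y
      cases m with
      | nil => simp at hm
      | cons b m =>
          simp only [List.length_cons, Nat.add_right_cancel_iff] at hm
          simp only [chainLen, List.zipWith]
          have h1 : dist (midpoint ℝ x y) (midpoint ℝ a b) ≤ (dist x a + dist y b) / 2 :=
            dist_midpoint_midpoint_le _ _ _ _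
          have h2 := ih m hm a b
          linarith




/-- splitting a segment at an intermediate point -/
lemma segment_split {x y z : E2} (h : Wbtw ℝ x y z) :
    segment ℝ x z = segment ℝ x y ∪ segment ℝ y z := by
  apply Subset.antisymm
  · rintro p hp
    rw [mem_segment_iff_wbtw] at hp
    obtain ⟨r, ⟨hr0, hr1⟩, hry⟩ := h
    obtain ⟨q, ⟨hq0, hq1⟩, hqp⟩ := hp
    have hy : y = x + r • (z - x) := by
      rw [← hry]; simp [AffineMap.lineMap_apply_module']; abel
    have hp' : p = x + q • (z - x) := by
      rw [← hqp]; simp [AffineMap.lineMap_apply_module']; abel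
    rcases le_total q r with hqr | hrq
    · left
      rw [mem_segment_iff_wbtw]
      have := wbtw_smul_vadd_smul_vadd_of_nonneg_of_le (R := ℝ) x (z - x) hq0 hqr
      simp only [vadd_eq_add] at this
      have e1 : p = q • (z - x) + x := by rw [hp']; abel
      have e2 : y = r • (z - x) + x := by rw [hy]; abel
      rw [← e1, ← e2] at this; exact this
    · right
      rw [mem_segment_iff_wbtw]
      have h2 : q - r ≤ 1 - r := by linarith
      have h0 : (0:ℝ) ≤ q - r := by linarith
      have := wbtw_smul_vadd_smul_vadd_of_nonneg_of_le (R := ℝ) y (z - x) h0 h2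
      simp only [vadd_eq_add] at this
      have e1 : p = (q - r) • (z - x) + y := by
        rw [hp', hy, sub_smul]; abel
      have e2 : z = (1 - r) • (z - x) + y := by
        rw [hy]; module
      rw [← e1, ← e2] at this; exact this
  · rintro p (hp | hp)
    · exact (convex_segment x z).segment_subset (left_mem_segment ℝ x z) h.mem_segment hp
    · exact (convex_segment x z).segment_subset h.mem_segment (right_mem_segment ℝ x z) hp

lemma sameRay_wbtw_or {s a b : E2} (h : SameRay ℝ (a - s) (b - s)) :
    Wbtw ℝ s a b ∨ Wbtw ℝ s b a := by
  obtain ⟨u, α, β, hα, hβ, -, ha, hb⟩ := h.exists_eq_smul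
  have ha' : a = α • u +ᵥ s := by
    simp only [vadd_eq_add, ← ha]; abel
  have hb' : b = β • u +ᵥ s := by
    simp only [vadd_eq_add, ← hb]; abel
  rw [ha', hb']
  exact wbtw_or_wbtw_smul_vadd_of_nonneg s u hα hβ

lemma wbtw_dist {x y z : E2} (h : Wbtw ℝ x y z) : dist x y + dist y z = dist x z :=
  dist_add_dist_eq_iff.mpr h




theorem chainSet_eq_of_min (t : E2) (Ps : List (Set E2))
    (hconv : ∀ S ∈ Ps, Convex ℝ S) (s : E2) (l m : List E2)
    (hl : IsMinChain s t Ps l) (hm : IsMinChain s t Ps m) :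
    chainSet s l t = chainSet s m t := by
  induction Ps generalizing s l m with
  | nil =>
      cases hl.1; cases hm.1; rfl
  | cons S Ps' ih =>
      obtain ⟨hlF, hlMin⟩ := hl
      obtain ⟨hmF, hmMin⟩ := hm
      obtain ⟨a, l2, rfl, ha, hl2⟩ :
          ∃ a l2, l = a :: l2 ∧ a ∈ S ∧ Feas l2 Ps' := by
        cases hlF with | cons h1 h2 => exact ⟨_, _, rfl, h1, h2⟩
      obtain ⟨b, m2, rfl, hb, hm2⟩ :
          ∃ b m2, m = b :: m2 ∧ b ∈ S ∧ Feas m2 Ps' := by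
        cases hmF with | cons h1 h2 => exact ⟨_, _, rfl, h1, h2⟩
      have hconvT : ∀ T ∈ Ps', Convex ℝ T := fun T hT => hconv T (by simp [hT])
      have hconvS : Convex ℝ S := hconv S (by simp)
      -- tail minimality
      have minTail : ∀ (x : E2) (u : List E2), x ∈ S →
          (∀ w, Feas w (S :: Ps') → chainLen s (x :: u) t ≤ chainLen s w t) →
          Feas u Ps' → IsMinChain x t Ps' u := by
        intro x u hxS hmin huF
        refine ⟨huF, fun w hwF => ?_⟩
        have := hmin (x :: w) (List.Forall₂.cons hxS hwF)
        simp only [chainLen] at this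
        linarith
      have minA : IsMinChain a t Ps' l2 := minTail a l2 ha hlMin hl2
      have minB : IsMinChain b t Ps' m2 := minTail b m2 hb hmMin hm2
      -- both chains have the same total length
      have hlm : chainLen s (a :: l2) t = chainLen s (b :: m2) t :=
        le_antisymm (hlMin _ (List.Forall₂.cons hb hm2)) (hmMin _ (List.Forall₂.cons ha hl2))
      -- midpoint argument: SameRay (a - s) (b - s)
      have hray : SameRay ℝ (a - s) (b - s) := by
        set mid := midpoint ℝ a b with hmiddef
        set zm := List.zipWith (fun u v => midpoint ℝ u v) l2 m2 with hzm
        have hfeas : Feas (mid :: zm) (S :: Ps') :=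
          List.Forall₂.cons (hconvS.segment_subset ha hb (midpoint_mem_segment _ _))
            (midList_feas hconvT hl2 hm2)
        have hminmid := hlMin _ hfeas
        have hlen : l2.length = m2.length := by
          rw [hl2.length_eq, hm2.length_eq]
        have hle : chainLen mid zm t ≤ (chainLen a l2 t + chainLen b m2 t) / 2 :=
          chainLen_midpoint_le t l2 m2 hlen a b
        have hds : dist s mid ≤ (dist s a + dist s b) / 2 := by
          have := dist_midpoint_midpoint_le s s a b
          simpa [midpoint_self] using this
        have hc1 : chainLen s (a :: l2) t = dist s a + chainLen a l2 t := rfl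
        have hc2 : chainLen s (b :: m2) t = dist s b + chainLen b m2 t := rfl
        have hc3 : chainLen s (mid :: zm) t = dist s mid + chainLen mid zm t := rfl
        have heq : dist s mid = (dist s a + dist s b) / 2 := by
          rw [hc1] at hminmid hlm
          rw [hc2] at hlm
          rw [hc3] at hminmid
          linarith
        have hnorm : ‖(a - s) + (b - s)‖ = ‖a - s‖ + ‖b - s‖ := by
          have h1 : dist s mid = ‖(a - s) + (b - s)‖ / 2 := by
            have hm2b : mid = (2⁻¹ : ℝ) • (a + b) := by
              rw [hmiddef, midpoint_eq_smul_add, invOf_eq_inv]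
            rw [dist_eq_norm, hm2b]
            rw [show s - (2⁻¹ : ℝ) • (a + b) = (-(2⁻¹ : ℝ)) • ((a - s) + (b - s)) by module]
            rw [norm_smul]
            simp only [norm_neg, Real.norm_eq_abs]
            rw [abs_of_pos]
            · ring
            · norm_num
          have h2 : dist s a = ‖a - s‖ := dist_eq_norm' s a
          have h3 : dist s b = ‖b - s‖ := dist_eq_norm' s b
          rw [h1, h2, h3] at heq
          linarith
        exact sameRay_iff_norm_add.mpr hnorm
      -- the main symmetric argument
      have key : ∀ (x1 : E2) (l1 : List E2) (x2 : E2) (u2 : List E2),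
          IsMinChain x1 t Ps' l1 → IsMinChain x2 t Ps' u2 →
          dist s x1 + chainLen x1 l1 t = dist s x2 + chainLen x2 u2 t →
          Wbtw ℝ s x1 x2 →
          chainSet s (x1 :: l1) t = chainSet s (x2 :: u2) t := by
        intro x1 l1 x2 u2 min1 min2 hlen12 hw
        have hdsb : dist s x1 + dist x1 x2 = dist s x2 := wbtw_dist hw
        have h1 : chainLen x1 u2 t ≤ dist x1 x2 + chainLen x2 u2 t :=
          chainLen_le_cons u2 x1 x2 t
        have h2 : chainLen x1 l1 t ≤ chainLen x1 u2 t := min1.2 u2 min2.1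
        have heq1 : chainLen x1 u2 t = chainLen x1 l1 t := by linarith
        have heq2 : chainLen x1 u2 t = dist x1 x2 + chainLen x2 u2 t := by linarith
        have min2b : IsMinChain x1 t Ps' u2 :=
          ⟨min2.1, fun u hu => by rw [heq1]; exact min1.2 u hu⟩
        have IH : chainSet x1 l1 t = chainSet x1 u2 t := ih hconvT x1 l1 u2 min1 min2b
        have hsplit1 : segment ℝ s x2 = segment ℝ s x1 ∪ segment ℝ x1 x2 := segment_split hw
        cases u2 with
        | nil =>
            have hwx : Wbtw ℝ x1 x2 t := by
              apply dist_add_dist_eq_iff.mp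
              have h3 : chainLen x1 ([] : List E2) t = dist x1 t := rfl
              have h4 : chainLen x2 ([] : List E2) t = dist x2 t := rfl
              rw [h3, h4] at heq2
              linarith
            have hsplit2 : segment ℝ x1 t = segment ℝ x1 x2 ∪ segment ℝ x2 t :=
              segment_split hwx
            show segment ℝ s x1 ∪ chainSet x1 l1 t = segment ℝ s x2 ∪ segment ℝ x2 t
            rw [IH]
            show segment ℝ s x1 ∪ segment ℝ x1 t = _
            rw [hsplit1, hsplit2, union_assoc]
        | cons c r =>
            have hwx : Wbtw ℝ x1 x2 c := by
              apply dist_add_dist_eq_iff.mp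
              have h3 : chainLen x1 (c :: r) t = dist x1 c + chainLen c r t := rfl
              have h4 : chainLen x2 (c :: r) t = dist x2 c + chainLen c r t := rfl
              rw [h3, h4] at heq2
              linarith
            have hsplit2 : segment ℝ x1 c = segment ℝ x1 x2 ∪ segment ℝ x2 c :=
              segment_split hwx
            show segment ℝ s x1 ∪ chainSet x1 l1 t
              = segment ℝ s x2 ∪ (segment ℝ x2 c ∪ chainSet c r t)
            rw [IH]
            show segment ℝ s x1 ∪ (segment ℝ x1 c ∪ chainSet c r t) = _
            rw [hsplit1, hsplit2]
            simp only [union_assoc]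
      have hlmB : dist s a + chainLen a l2 t = dist s b + chainLen b m2 t := hlm
      rcases sameRay_wbtw_or hray with hw | hw
      · exact key a l2 b m2 minA minB hlmB hw
      · exact (key b m2 a l2 minB minA hlmB.symm hw).symm


lemma dist_le_chainLen : ∀ (l : List E2) (x y p : E2), p ∈ l → dist x p ≤ chainLen x l y := by
  intro l
  induction l with
  | nil => intro x y p hp; simp at hp
  | cons c l ih =>
      intro x y p hp
      rcases List.mem_cons.mp hp with rfl | hp
      · simp only [chainLen]
        have := chainLen_nonneg l p y
        linarith
      · calc dist x p ≤ dist x c + dist c p := dist_triangle x c p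
          _ ≤ dist x c + chainLen c l y := by linarith [ih c y p hp]
          _ = chainLen x (c :: l) y := rfl

lemma continuous_chainLen_ofFn (t : E2) :
    ∀ (k : ℕ), Continuous fun p : E2 × (Fin k → E2) => chainLen p.1 (List.ofFn p.2) t := by
  intro k
  induction k with
  | zero =>
      simp only [List.ofFn_zero]
      show Continuous fun p : E2 × (Fin 0 → E2) => dist p.1 t
      fun_prop
  | succ n ih =>
      have : ∀ p : E2 × (Fin (n+1) → E2),
          chainLen p.1 (List.ofFn p.2) t
            = dist p.1 (p.2 0) + chainLen (p.2 0) (List.ofFn (p.2 ∘ Fin.succ)) t := by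
        intro p; rw [List.ofFn_succ]; rfl
      simp only [this]
      apply Continuous.add
      · fun_prop
      · have hc : Continuous fun p : E2 × (Fin (n+1) → E2) =>
            ((p.2 0, p.2 ∘ Fin.succ) : E2 × (Fin n → E2)) := by
          apply Continuous.prodMk
          · exact (continuous_apply 0).comp continuous_snd
          · exact continuous_pi fun i => (continuous_apply i.succ).comp continuous_snd
        exact ih.comp hc

lemma feas_ofFn_iff {k : ℕ} (P : Fin k → Set E2) (q : Fin k → E2) :
    Feas (List.ofFn q) (List.ofFn P) ↔ ∀ i, q i ∈ P i := by
  rw [Feas, List.forall₂_iff_get]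
  simp only [List.length_ofFn, List.get_ofFn, true_and]
  constructor
  · intro h i
    have := h i.1 (by simpa using i.2) (by simpa using i.2)
    simpa using this
  · intro h i h1 h2
    simpa using h ⟨i, by simpa using h1⟩

lemma feas_exists_ofFn {l : List E2} {k : ℕ} (P : Fin k → Set E2)
    (hl : Feas l (List.ofFn P)) : ∃ q : Fin k → E2, (∀ i, q i ∈ P i) ∧ List.ofFn q = l := by
  have hlen : l.length = k := by
    have := List.Forall₂.length_eq hl
    simpa using this
  refine ⟨fun i => l.get (Fin.cast hlen.symm i), ?_, ?_⟩
  · intro i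
    rw [Feas, List.forall₂_iff_get] at hl
    have := hl.2 i.1 (by omega) (by simp [i.2])
    simpa using this
  · apply List.ext_get (by simp [hlen])
    intro n h1 h2
    simp [Fin.cast]

theorem exists_minChain (s t : E2) {k : ℕ} (P : Fin k → Set E2)
    (hclosed : ∀ i, IsClosed (P i)) (hne : ∀ i, (P i).Nonempty) :
    ∃ l, IsMinChain s t (List.ofFn P) l := by
  classical
  set K : Set (Fin k → E2) := {q | ∀ i, q i ∈ P i} with hK
  have hKne : K.Nonempty := ⟨fun i => (hne i).choose, fun i => (hne i).choose_spec⟩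
  obtain ⟨q₀, hq₀⟩ := hKne
  set g : (Fin k → E2) → ℝ := fun q => chainLen s (List.ofFn q) t with hg
  have hgcont : Continuous g := by
    have := continuous_chainLen_ofFn t k
    exact this.comp (Continuous.prodMk continuous_const continuous_id)
  set A : Set (Fin k → E2) := {q ∈ K | g q ≤ g q₀} with hA
  have hAne : A.Nonempty := ⟨q₀, hq₀, le_refl _⟩
  have hKclosed : IsClosed K := by
    have : K = ⋂ i, (fun q : Fin k → E2 => q i) ⁻¹' (P i) := by
      ext q; simp [hK]
    rw [this]
    exact isClosed_iInter fun i => (hclosed i).preimage (continuous_apply i)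
  have hAclosed : IsClosed A := by
    have : A = K ∩ g ⁻¹' (Iic (g q₀)) := rfl
    rw [this]
    exact hKclosed.inter (isClosed_Iic.preimage hgcont)
  have hAcomp : IsCompact A := by
    apply IsCompact.of_isClosed_subset (isCompact_univ_pi fun i =>
      isCompact_closedBall s (g q₀)) hAclosed
    intro q hq
    simp only [mem_univ_pi, mem_closedBall]
    intro i
    have hmem : q i ∈ List.ofFn q := by
      rw [List.mem_ofFn]
      exact ⟨i, rfl⟩
    calc dist (q i) s = dist s (q i) := dist_comm _ _
      _ ≤ chainLen s (List.ofFn q) t := dist_le_chainLen _ s t _ hmem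
      _ ≤ g q₀ := hq.2
  obtain ⟨qm, hqmA, hqmmin⟩ := hAcomp.exists_isMinOn hAne hgcont.continuousOn
  refine ⟨List.ofFn qm, (feas_ofFn_iff P qm).mpr hqmA.1, ?_⟩
  intro m hm
  obtain ⟨q, hqK, rfl⟩ := feas_exists_ofFn P hm
  by_cases hcase : g q ≤ g q₀
  · exact hqmmin ⟨hqK, hcase⟩
  · calc chainLen s (List.ofFn qm) t ≤ g q₀ := hqmmin ⟨hq₀, le_refl _⟩
      _ ≤ chainLen s (List.ofFn q) t := (not_le.mp hcase).le


lemma evar_Icc_add (F : ℝ → E2) {a b c : ℝ} (hab : a ≤ b) (hbc : b ≤ c) :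
    eVariationOn F (Icc a b) + eVariationOn F (Icc b c) = eVariationOn F (Icc a c) := by
  have := eVariationOn.Icc_add_Icc F (s := univ) hab hbc (mem_univ b)
  simpa [univ_inter] using this

lemma evar_edist_le (F : ℝ → E2) {a b u v : ℝ} (hu : u ∈ Icc a b) (hv : v ∈ Icc a b) :
    edist (F u) (F v) ≤ eVariationOn F (Icc a b) :=
  eVariationOn.edist_le F hu hv

/-- If the variation of `F` on `[a,b]` equals the distance of the endpoint images,
then the image of `[a,b]` is exactly the segment between them. -/
lemma image_eq_segment_of_eVariationOn_eq {F : ℝ → E2} {a b : ℝ} (hab : a ≤ b)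
    (hcont : ContinuousOn F (Icc a b))
    (hvar : eVariationOn F (Icc a b) = edist (F a) (F b)) :
    F '' Icc a b = segment ℝ (F a) (F b) := by
  have hmem : ∀ u ∈ Icc a b, dist (F a) (F u) + dist (F u) (F b) = dist (F a) (F b) := by
    intro u hu
    have h1 : edist (F a) (F u) + edist (F u) (F b) ≤ edist (F a) (F b) := by
      calc edist (F a) (F u) + edist (F u) (F b)
          ≤ eVariationOn F (Icc a u) + eVariationOn F (Icc u b) := by
            gcongr
            · exact evar_edist_le F (left_mem_Icc.mpr hu.1) (right_mem_Icc.mpr hu.1)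
            · exact evar_edist_le F (left_mem_Icc.mpr hu.2) (right_mem_Icc.mpr hu.2)
        _ = eVariationOn F (Icc a b) := evar_Icc_add F hu.1 hu.2
        _ = edist (F a) (F b) := hvar
    have h2 : dist (F a) (F u) + dist (F u) (F b) ≤ dist (F a) (F b) := by
      rw [edist_dist, edist_dist, edist_dist, ← ENNReal.ofReal_add dist_nonneg dist_nonneg] at h1
      exact (ENNReal.ofReal_le_ofReal_iff dist_nonneg).mp h1
    have h3 := dist_triangle (F a) (F u) (F b)
    linarith
  have hsub : F '' Icc a b ⊆ segment ℝ (F a) (F b) := by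
    rintro p ⟨u, hu, rfl⟩
    rw [mem_segment_iff_wbtw]
    exact dist_add_dist_eq_iff.mp (hmem u hu)
  apply Subset.antisymm hsub
  rcases eq_or_ne (F a) (F b) with hfab | hfab
  · rw [← hfab, segment_same]
    rintro p rfl
    exact ⟨a, left_mem_Icc.mpr hab, rfl⟩
  · intro p hp
    set D := dist (F a) (F b) with hD
    have hDpos : 0 < D := dist_pos.mpr hfab
    rw [segment_eq_image'] at hp
    obtain ⟨θ, ⟨hθ0, hθ1⟩, rfl⟩ := hp
    set φ : ℝ → ℝ := fun u => dist (F a) (F u) with hφ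
    have hφcont : ContinuousOn φ (Icc a b) := (continuous_dist.comp
      (Continuous.prodMk continuous_const continuous_id)).comp_continuousOn hcont
    have hiv := intermediate_value_Icc hab hφcont
    have hmem2 : θ * D ∈ Icc (φ a) (φ b) := by
      constructor
      · simp [hφ]
        positivity
      · simp only [hφ, dist_self]
        calc θ * D ≤ 1 * D := by nlinarith
          _ = dist (F a) (F b) := by rw [one_mul]
    obtain ⟨u, hu, hphiu⟩ := hiv hmem2
    have huseg : F u ∈ segment ℝ (F a) (F b) := hsub ⟨u, hu, rfl⟩
    rw [segment_eq_image'] at huseg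
    obtain ⟨θ', ⟨hθ0', hθ1'⟩, hFu⟩ := huseg
    have hdist : dist (F a) (F u) = θ' * D := by
      rw [← hFu]
      rw [dist_eq_norm]
      rw [show F a - (F a + θ' • (F b - F a)) = (-θ') • (F b - F a) by module]
      rw [norm_smul, norm_neg]
      simp only [Real.norm_eq_abs, abs_of_nonneg hθ0']
      rw [hD, dist_eq_norm, norm_sub_rev (F a) (F b)]
    have hθθ : θ' = θ := by
      rw [hφ] at hphiu
      simp only at hphiu
      rw [hdist] at hphiu
      have := mul_right_cancel₀ (ne_of_gt hDpos) hphiu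
      linarith [this]
    refine ⟨u, hu, ?_⟩
    rw [← hFu, hθθ]

lemma chain_le_aux {a b : ℝ} {ts : List ℝ} (h : List.Chain (· ≤ ·) a (ts ++ [b])) : a ≤ b := by
  induction ts generalizing a with
  | nil => cases h with | cons_cons h1 _ => exact h1
  | cons c ts ih =>
      cases h with | cons_cons h1 h2 => exact le_trans h1 (ih h2)

/-- V1 : lower bound on variation by a sampled chain. -/
lemma chain_le_evar (F : ℝ → E2) : ∀ (ts : List ℝ) (a b : ℝ),
    List.Chain (· ≤ ·) a (ts ++ [b]) →
    ENNReal.ofReal (chainLen (F a) (ts.map F) (F b)) ≤ eVariationOn F (Icc a b) := by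
  intro ts
  induction ts with
  | nil =>
      intro a b h
      have hab : a ≤ b := chain_le_aux h
      have : chainLen (F a) ([] : List E2) (F b) = dist (F a) (F b) := rfl
      rw [List.map_nil, this, ← edist_dist]
      exact evar_edist_le F (left_mem_Icc.mpr hab) (right_mem_Icc.mpr hab)
  | cons c ts ih =>
      intro a b h
      cases h with | cons_cons h1 h2 =>
      have hcb : c ≤ b := chain_le_aux h2
      have hab : a ≤ b := le_trans h1 hcb
      have hchain : chainLen (F a) ((c :: ts).map F) (F b)
          = dist (F a) (F c) + chainLen (F c) (ts.map F) (F b) := rfl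
      rw [hchain, ENNReal.ofReal_add dist_nonneg (chainLen_nonneg _ _ _)]
      calc ENNReal.ofReal (dist (F a) (F c)) + ENNReal.ofReal (chainLen (F c) (ts.map F) (F b))
          ≤ eVariationOn F (Icc a c) + eVariationOn F (Icc c b) := by
            gcongr
            · rw [← edist_dist]
              exact evar_edist_le F (left_mem_Icc.mpr h1) (right_mem_Icc.mpr h1)
            · exact ih c b h2
        _ = eVariationOn F (Icc a b) := evar_Icc_add F h1 hcb

/-- V2 : if the variation equals the sampled chain length, the image is the chain set. -/
lemma image_eq_chainSet_of_evar_eq (F : ℝ → E2) : ∀ (ts : List ℝ) (a b : ℝ),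
    List.Chain (· ≤ ·) a (ts ++ [b]) → ContinuousOn F (Icc a b) →
    eVariationOn F (Icc a b) = ENNReal.ofReal (chainLen (F a) (ts.map F) (F b)) →
    F '' Icc a b = chainSet (F a) (ts.map F) (F b) := by
  intro ts
  induction ts with
  | nil =>
      intro a b h hcont hvar
      have hab : a ≤ b := chain_le_aux h
      have : chainLen (F a) ([] : List E2) (F b) = dist (F a) (F b) := rfl
      rw [List.map_nil] at hvar ⊢
      rw [this, ← edist_dist] at hvar
      exact image_eq_segment_of_eVariationOn_eq hab hcont hvar
  | cons c ts ih =>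
      intro a b h hcont hvar
      cases h with | cons_cons h1 h2 =>
      have hcb : c ≤ b := chain_le_aux h2
      have hab : a ≤ b := le_trans h1 hcb
      have hIcc : Icc a b = Icc a c ∪ Icc c b := (Icc_union_Icc_eq_Icc h1 hcb).symm
      -- the two lower bounds
      have hlow1 : edist (F a) (F c) ≤ eVariationOn F (Icc a c) :=
        evar_edist_le F (left_mem_Icc.mpr h1) (right_mem_Icc.mpr h1)
      have hlow2 : ENNReal.ofReal (chainLen (F c) (ts.map F) (F b)) ≤ eVariationOn F (Icc c b) :=
        chain_le_evar F ts c b h2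
      have hsum : eVariationOn F (Icc a c) + eVariationOn F (Icc c b)
          = edist (F a) (F c) + ENNReal.ofReal (chainLen (F c) (ts.map F) (F b)) := by
        rw [evar_Icc_add F h1 hcb, hvar]
        have : chainLen (F a) ((c :: ts).map F) (F b)
            = dist (F a) (F c) + chainLen (F c) (ts.map F) (F b) := rfl
        rw [this, ENNReal.ofReal_add dist_nonneg (chainLen_nonneg _ _ _), edist_dist]
      have hfin1 : eVariationOn F (Icc a c) ≠ ⊤ := by
        intro htop
        rw [htop] at hsum
        simp at hsum
        exact (ENNReal.add_ne_top.mpr ⟨edist_ne_top _ _, ENNReal.ofReal_ne_top⟩) hsum.symm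
      have hfin2 : eVariationOn F (Icc c b) ≠ ⊤ := by
        intro htop
        rw [htop] at hsum
        simp at hsum
        exact (ENNReal.add_ne_top.mpr ⟨edist_ne_top _ _, ENNReal.ofReal_ne_top⟩) hsum.symm
      have heq1 : eVariationOn F (Icc a c) = edist (F a) (F c) := by
        by_contra hne
        have hlt : edist (F a) (F c) < eVariationOn F (Icc a c) :=
          lt_of_le_of_ne hlow1 (Ne.symm hne)
        have : edist (F a) (F c) + ENNReal.ofReal (chainLen (F c) (ts.map F) (F b))
            < eVariationOn F (Icc a c) + eVariationOn F (Icc c b) :=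
          ENNReal.add_lt_add_of_lt_of_le ENNReal.ofReal_ne_top hlt hlow2
        rw [hsum] at this
        exact lt_irrefl _ this
      have heq2 : eVariationOn F (Icc c b) = ENNReal.ofReal (chainLen (F c) (ts.map F) (F b)) := by
        by_contra hne
        have hlt : ENNReal.ofReal (chainLen (F c) (ts.map F) (F b)) < eVariationOn F (Icc c b) :=
          lt_of_le_of_ne hlow2 (Ne.symm hne)
        have : edist (F a) (F c) + ENNReal.ofReal (chainLen (F c) (ts.map F) (F b))
            < eVariationOn F (Icc a c) + eVariationOn F (Icc c b) :=
          ENNReal.add_lt_add_of_le_of_lt (edist_ne_top _ _) hlow1 hlt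
        rw [hsum] at this
        exact lt_irrefl _ this
      have hseg : F '' Icc a c = segment ℝ (F a) (F c) :=
        image_eq_segment_of_eVariationOn_eq h1 (hcont.mono (by rw [hIcc]; exact subset_union_left)) heq1
      have hrest : F '' Icc c b = chainSet (F c) (ts.map F) (F b) :=
        ih c b h2 (hcont.mono (by rw [hIcc]; exact subset_union_right)) heq2
      have himg : F '' Icc a b = F '' Icc a c ∪ F '' Icc c b := by
        rw [hIcc, image_union]
      rw [himg, hseg, hrest]
      rfl


/-- the canonical extension of a path to `ℝ`. -/
def pathF {s t : E2} (γ : Path s t) : ℝ → E2 :=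
  fun x => γ (projIcc (0:ℝ) 1 zero_le_one x)

lemma pathF_cont {s t : E2} (γ : Path s t) : Continuous (pathF γ) :=
  γ.continuous.comp continuous_projIcc

lemma pathF_zero {s t : E2} (γ : Path s t) : pathF γ 0 = s := by
  have : projIcc (0:ℝ) 1 zero_le_one 0 = 0 := by
    rw [projIcc_of_mem zero_le_one (left_mem_Icc.mpr zero_le_one)]
    rfl
  rw [pathF, this, γ.source]

lemma pathF_one {s t : E2} (γ : Path s t) : pathF γ 1 = t := by
  have : projIcc (0:ℝ) 1 zero_le_one 1 = 1 := by
    rw [projIcc_of_mem zero_le_one (right_mem_Icc.mpr zero_le_one)]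
    rfl
  rw [pathF, this, γ.target]

lemma pathF_coe {s t : E2} (γ : Path s t) (u : unitInterval) : pathF γ (u : ℝ) = γ u := by
  rw [pathF, projIcc_of_mem zero_le_one u.2]

lemma projIcc_image : projIcc (0:ℝ) 1 zero_le_one '' Icc 0 1 = univ := by
  apply eq_univ_of_forall
  rintro ⟨v, hv⟩
  exact ⟨v, hv, projIcc_of_mem zero_le_one hv⟩

lemma pathLen_eq {s t : E2} (γ : Path s t) :
    pathLen γ = eVariationOn (pathF γ) (Icc 0 1) := by
  have h := eVariationOn.comp_eq_of_monotoneOn (fun x : unitInterval => γ x)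
    (projIcc (0:ℝ) 1 zero_le_one) ((monotone_projIcc zero_le_one).monotoneOn (Icc 0 1))
  rw [projIcc_image] at h
  rw [pathLen, ← h]
  rfl

lemma range_eq_image {s t : E2} (γ : Path s t) :
    Set.range γ = pathF γ '' Icc 0 1 := by
  have : Set.range (fun x : unitInterval => γ x) = γ '' univ := by
    rw [image_univ]
  rw [this, ← projIcc_image, ← image_comp]
  rfl

/-- straight segment path -/
def segPath (x y : E2) : Path x y where
  toFun := fun u => x + (u : ℝ) • (y - x)
  continuous_toFun := by fun_prop
  source' := by simp
  target' := by simp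

/-- path along a polygonal chain -/
def polyPath : (x y : E2) → List E2 → Path x y
  | x, y, [] => segPath x y
  | x, y, c :: l => (segPath x c).trans (polyPath c y l)

lemma pathLen_segPath_le (x y : E2) :
    pathLen (segPath x y) ≤ ENNReal.ofReal (dist x y) := by
  rw [pathLen_eq]
  set f : ℝ → E2 := fun u => x + u • (y - x) with hf
  have heq : EqOn (pathF (segPath x y)) f (Icc 0 1) := by
    intro u hu
    rw [pathF, projIcc_of_mem zero_le_one hu]
    rfl
  rw [eVariationOn.eq_of_eqOn heq]
  have hlip : LipschitzWith ‖y - x‖₊ f := by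
    apply LipschitzWith.of_dist_le_mul
    intro u v
    rw [hf]
    simp only
    rw [dist_eq_norm, show x + u • (y - x) - (x + v • (y - x)) = (u - v) • (y - x) by module,
      norm_smul]
    rw [Real.dist_eq, Real.norm_eq_abs]
    rw [mul_comm]
    rfl
  have hvar : eVariationOn f (Icc 0 1) ≤ ‖y - x‖₊ * eVariationOn id (Icc (0:ℝ) 1) := by
    have := (hlip.lipschitzOnWith (s := univ)).comp_eVariationOn_le
      (f := f) (g := id) (s := Icc (0:ℝ) 1) (mapsTo_univ _ _)
    simpa using this
  have hid : eVariationOn (id : ℝ → ℝ) (Icc 0 1) ≤ ENNReal.ofReal 1 := by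
    have := MonotoneOn.eVariationOn_le (f := (id : ℝ → ℝ)) (s := Icc (0:ℝ) 1)
      (monotoneOn_id) (left_mem_Icc.mpr zero_le_one) (right_mem_Icc.mpr zero_le_one)
    simpa using this
  calc eVariationOn f (Icc 0 1) ≤ ‖y - x‖₊ * eVariationOn id (Icc (0:ℝ) 1) := hvar
    _ ≤ ‖y - x‖₊ * ENNReal.ofReal 1 := by gcongr
    _ = ‖y - x‖₊ := by rw [ENNReal.ofReal_one, mul_one]
    _ = ENNReal.ofReal (dist x y) := by
        rw [← ENNReal.ofReal_coe_nnreal]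
        congr 1
        rw [coe_nnnorm, dist_eq_norm, norm_sub_rev]

lemma pathLen_trans_le {x y z : E2} (γ : Path x y) (γ' : Path y z) :
    pathLen (γ.trans γ') ≤ pathLen γ + pathLen γ' := by
  rw [pathLen_eq, pathLen_eq, pathLen_eq]
  set T := pathF (γ.trans γ') with hT
  have hsplit : eVariationOn T (Icc 0 1)
      = eVariationOn T (Icc 0 (1/2)) + eVariationOn T (Icc (1/2) 1) := by
    have h := eVariationOn.Icc_add_Icc T (s := univ) (by norm_num : (0:ℝ) ≤ 1/2)
      (by norm_num : (1:ℝ)/2 ≤ 1) (mem_univ _)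
    simp only [univ_inter] at h
    exact h.symm
  rw [hsplit]
  gcongr
  · -- first half
    have heq : EqOn T ((pathF γ) ∘ (fun u : ℝ => 2 * u)) (Icc 0 (1/2)) := by
      intro u hu
      have hu1 : u ∈ Icc (0:ℝ) 1 := ⟨hu.1, by linarith [hu.2]⟩
      have h2u : 2 * u ∈ Icc (0:ℝ) 1 := ⟨by linarith [hu.1], by linarith [hu.2]⟩
      rw [hT, Function.comp_apply, pathF, pathF, projIcc_of_mem zero_le_one hu1,
        projIcc_of_mem zero_le_one h2u]
      rw [Path.trans_apply]
      simp only
      rw [dif_pos (by exact hu.2)]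
    rw [eVariationOn.eq_of_eqOn heq]
    apply eVariationOn.comp_le_of_monotoneOn
    · intro a _ b _ hab
      simp only
      linarith
    · intro u hu
      simp only [mem_Icc] at hu ⊢
      constructor <;> linarith
  · -- second half
    have heq : EqOn T ((pathF γ') ∘ (fun u : ℝ => 2 * u - 1)) (Icc (1/2) 1) := by
      intro u hu
      have hu1 : u ∈ Icc (0:ℝ) 1 := ⟨by linarith [hu.1], hu.2⟩
      have h2u : 2 * u - 1 ∈ Icc (0:ℝ) 1 := ⟨by linarith [hu.1], by linarith [hu.2]⟩
      rw [hT, Function.comp_apply, pathF, pathF, projIcc_of_mem zero_le_one hu1,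
        projIcc_of_mem zero_le_one h2u]
      rw [Path.trans_apply]
      simp only
      rcases eq_or_lt_of_le hu.1 with heq2 | hlt
      · rw [dif_pos (show (u:ℝ) ≤ 1/2 by rw [← heq2])]
        have hv : ∀ (v : unitInterval), (v:ℝ) = 1 → γ v = y := fun v hv => by
          rw [show v = 1 from Subtype.ext (by simpa using hv)]; exact γ.target
        have hw : ∀ (w : unitInterval), (w:ℝ) = 0 → γ' w = y := fun w hw => by
          rw [show w = 0 from Subtype.ext (by simpa using hw)]; exact γ'.source
        rw [hv _ (show 2 * u = 1 by rw [← heq2]; norm_num),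
          hw _ (show 2 * u - 1 = 0 by rw [← heq2]; norm_num)]
      · rw [dif_neg (show ¬((u:ℝ) ≤ 1/2) by push_neg; exact hlt)]
    rw [eVariationOn.eq_of_eqOn heq]
    apply eVariationOn.comp_le_of_monotoneOn
    · intro a _ b _ hab
      simp only
      linarith
    · intro u hu
      simp only [mem_Icc] at hu ⊢
      constructor <;> linarith

lemma pathLen_polyPath_le : ∀ (l : List E2) (x y : E2),
    pathLen (polyPath x y l) ≤ ENNReal.ofReal (chainLen x l y) := by
  intro l
  induction l with
  | nil => intro x y; exact pathLen_segPath_le x y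
  | cons c l ih =>
      intro x y
      calc pathLen (polyPath x y (c :: l))
          ≤ pathLen (segPath x c) + pathLen (polyPath c y l) := pathLen_trans_le _ _
        _ ≤ ENNReal.ofReal (dist x c) + ENNReal.ofReal (chainLen c l y) := by
            gcongr
            · exact pathLen_segPath_le x c
            · exact ih c y
        _ = ENNReal.ofReal (chainLen x (c :: l) y) := by
            rw [← ENNReal.ofReal_add dist_nonneg (chainLen_nonneg _ _ _)]
            rfl


lemma tau_mem (j : ℕ) : 1 - (1/2:ℝ)^(j+1) ∈ Icc (0:ℝ) 1 := by
  constructor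
  · have h1 : (1/2:ℝ)^(j+1) ≤ 1 := pow_le_one₀ (by norm_num) (by norm_num)
    linarith
  · have h2 : (0:ℝ) < (1/2:ℝ)^(j+1) := pow_pos (by norm_num) _
    linarith

lemma polyPath_vertex : ∀ (l : List E2) (x y : E2) (j : ℕ) (hj : j < l.length),
    polyPath x y l ⟨1 - (1/2:ℝ)^(j+1), tau_mem j⟩ = l.get ⟨j, hj⟩ := by
  intro l
  induction l with
  | nil => intro x y j hj; simp at hj
  | cons c l ih =>
      intro x y j hj
      cases j with
      | zero =>
          show (segPath x c).trans (polyPath c y l) _ = c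
          rw [Path.trans_apply]
          rw [dif_pos (show (1:ℝ) - (1/2)^(0+1) ≤ 1/2 by norm_num)]
          show x + (2 * (1 - (1/2:ℝ)^(0+1))) • (c - x) = c
          norm_num
      | succ j =>
          show (segPath x c).trans (polyPath c y l) _ = _
          rw [Path.trans_apply]
          rw [dif_neg (show ¬((1:ℝ) - (1/2)^(j+1+1) ≤ 1/2) by
            push_neg
            have : (1/2:ℝ)^(j+2) ≤ (1/2)^2 := by
              apply pow_le_pow_of_le_one (by norm_num) (by norm_num)
              omega
            norm_num at this ⊢
            linarith)]
          have hj' : j < l.length := by simpa using hj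
          have hval : ∀ (v : unitInterval), (v:ℝ) = 1 - (1/2:ℝ)^(j+1) →
              polyPath c y l v = l.get ⟨j, hj'⟩ := by
            intro v hv
            rw [show v = ⟨1 - (1/2:ℝ)^(j+1), tau_mem j⟩ from Subtype.ext (by simpa using hv)]
            exact ih c y j hj'
          rw [hval _ (show 2 * (1 - (1/2:ℝ)^(j+1+1)) - 1 = 1 - (1/2:ℝ)^(j+1) by
            rw [pow_succ]; ring)]
          rfl

lemma chain_ofFn : ∀ (k : ℕ) (v : Fin k → ℝ), Monotone v → ∀ a b : ℝ,
    (∀ i, a ≤ v i) → (∀ i, v i ≤ b) → a ≤ b →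
    List.Chain (· ≤ ·) a (List.ofFn v ++ [b]) := by
  intro k
  induction k with
  | zero =>
      intro v _ a b _ _ hab
      simp only [List.ofFn_zero, List.nil_append]
      exact List.Chain.cons hab List.Chain.nil
  | succ n ih =>
      intro v hv a b ha hb hab
      rw [List.ofFn_succ]
      refine List.Chain.cons (ha 0) ?_
      apply ih (v ∘ Fin.succ) (fun i j hij => hv (by exact Fin.succ_le_succ_iff.mpr hij)) (v 0) b
      · intro i
        exact hv (by exact Fin.zero_le _)
      · intro i
        exact hb _
      · exact hb 0

lemma polyPath_visits {k : ℕ} (P : Fin k → Set E2) (l : List E2) (s t : E2)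
    (hF : Feas l (List.ofFn P)) : VisitsInOrder (polyPath s t l) P := by
  have hlen : l.length = k := by simpa using hF.length_eq
  refine ⟨fun i => ⟨1 - (1/2:ℝ)^(i.1+1), tau_mem i.1⟩, ?_, ?_⟩
  · intro i j hij
    have : (1/2:ℝ)^(j.1+1) ≤ (1/2:ℝ)^(i.1+1) := by
      apply pow_le_pow_of_le_one (by norm_num) (by norm_num)
      omega
    simp only [Subtype.mk_le_mk]
    linarith
  · intro i
    have hi : i.1 < l.length := by omega
    rw [polyPath_vertex l s t i.1 hi]
    rw [Feas, List.forall₂_iff_get] at hF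
    have := hF.2 i.1 hi (by simpa using i.2)
    simpa using this

end StmtAux

open StmtAux in
/-- There is a unique shortest path from `s` to `t` visiting the closed convex sets
`P 1, …, P k` in order: a minimizer exists, and any two minimizers trace out the same
curve. -/
theorem stmt16 (s t : E2) (k : ℕ) (P : Fin k → Set E2)
    (hconv : ∀ i, Convex ℝ (P i)) (hclosed : ∀ i, IsClosed (P i))
    (hne : ∀ i, (P i).Nonempty) :
    ∃ γ : Path s t, VisitsInOrder γ P ∧
      (∀ γ' : Path s t, VisitsInOrder γ' P → pathLen γ ≤ pathLen γ') ∧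
      (∀ γ' : Path s t, VisitsInOrder γ' P →
        (∀ γ'' : Path s t, VisitsInOrder γ'' P → pathLen γ' ≤ pathLen γ'') →
        Set.range γ' = Set.range γ) := by
  obtain ⟨lmin, hlminF, hlminMin⟩ := exists_minChain s t P hclosed hne
  set γstar := polyPath s t lmin with hγstar
  have hvisit : VisitsInOrder γstar P := polyPath_visits P lmin s t hlminF
  set Lmin := chainLen s lmin t with hLmin
  -- data for any visiting path
  have data : ∀ (γ' : Path s t), VisitsInOrder γ' P →
      ∃ (ts : List ℝ) (ms : List E2),
        List.Chain (· ≤ ·) 0 (ts ++ [1]) ∧ ts.map (pathF γ') = ms ∧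
        Feas ms (List.ofFn P) ∧
        ENNReal.ofReal (chainLen s ms t) ≤ pathLen γ' := by
    intro γ' hv
    obtain ⟨q, hqmono, hqmem⟩ := hv
    refine ⟨List.ofFn (fun i => ((q i : ℝ))), List.ofFn (fun i => γ' (q i)), ?_, ?_, ?_, ?_⟩
    · apply chain_ofFn k (fun i => ((q i : ℝ)))
      · intro i j hij
        exact_mod_cast hqmono hij
      · intro i; exact (q i).2.1
      · intro i; exact (q i).2.2
      · exact zero_le_one
    · rw [List.map_ofFn]
      congr 1
      funext i
      exact pathF_coe γ' (q i)
    · exact (feas_ofFn_iff P _).mpr hqmem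
    · have hchain := chain_le_evar (pathF γ') (List.ofFn (fun i => ((q i : ℝ)))) 0 1
        (by
          apply chain_ofFn k (fun i => ((q i : ℝ)))
          · intro i j hij; exact_mod_cast hqmono hij
          · intro i; exact (q i).2.1
          · intro i; exact (q i).2.2
          · exact zero_le_one)
      rw [pathLen_eq]
      have hms : (List.ofFn (fun i => ((q i : ℝ)))).map (pathF γ')
          = List.ofFn (fun i => γ' (q i)) := by
        rw [List.map_ofFn]; congr 1; funext i; exact pathF_coe γ' (q i)
      rw [pathF_zero, pathF_one, hms] at hchain
      exact hchain
  -- lower bound for any visiting path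
  have hlower : ∀ (γ' : Path s t), VisitsInOrder γ' P →
      ENNReal.ofReal Lmin ≤ pathLen γ' := by
    intro γ' hv
    obtain ⟨ts, ms, _, _, hfeas, hbound⟩ := data γ' hv
    calc ENNReal.ofReal Lmin ≤ ENNReal.ofReal (chainLen s ms t) :=
          ENNReal.ofReal_le_ofReal (hlminMin ms hfeas)
      _ ≤ pathLen γ' := hbound
  have hupper : pathLen γstar ≤ ENNReal.ofReal Lmin := pathLen_polyPath_le lmin s t
  have hstarmin : ∀ (γ'' : Path s t), VisitsInOrder γ'' P → pathLen γstar ≤ pathLen γ'' :=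
    fun γ'' hv'' => le_trans hupper (hlower γ'' hv'')
  -- any minimizer's range is the chain set of a minimizing chain
  have rangeChar : ∀ (γ' : Path s t), VisitsInOrder γ' P →
      (∀ γ'' : Path s t, VisitsInOrder γ'' P → pathLen γ' ≤ pathLen γ'') →
      ∃ ms, IsMinChain s t (List.ofFn P) ms ∧ Set.range γ' = chainSet s ms t := by
    intro γ' hv hmin
    obtain ⟨ts, ms, hchain, hmap, hfeas, hbound⟩ := data γ' hv
    have hplen : pathLen γ' = ENNReal.ofReal Lmin :=
      le_antisymm (le_trans (hmin γstar hvisit) hupper) (hlower γ' hv)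
    have hmseq : chainLen s ms t = Lmin := by
      apply le_antisymm
      · have h1 : ENNReal.ofReal (chainLen s ms t) ≤ ENNReal.ofReal Lmin := by
          rw [← hplen]; exact hbound
        exact (ENNReal.ofReal_le_ofReal_iff (by
          rw [hLmin]; exact chainLen_nonneg _ _ _)).mp h1
      · exact hlminMin ms hfeas
    have hmsmin : IsMinChain s t (List.ofFn P) ms :=
      ⟨hfeas, fun u hu => by rw [hmseq]; exact hlminMin u hu⟩
    refine ⟨ms, hmsmin, ?_⟩
    have hvar : eVariationOn (pathF γ') (Icc 0 1)
        = ENNReal.ofReal (chainLen (pathF γ' 0) (ts.map (pathF γ')) (pathF γ' 1)) := by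
      rw [pathF_zero, pathF_one, hmap, hmseq, ← pathLen_eq, hplen]
    have himg := image_eq_chainSet_of_evar_eq (pathF γ') ts 0 1 hchain
      (pathF_cont γ').continuousOn hvar
    rw [range_eq_image, himg, pathF_zero, pathF_one, hmap]
  refine ⟨γstar, hvisit, hstarmin, ?_⟩
  intro γ' hv' hmin'
  obtain ⟨ms1, hms1, hr1⟩ := rangeChar γ' hv' hmin'
  obtain ⟨ms2, hms2, hr2⟩ := rangeChar γstar hvisit hstarmin
  have hconvList : ∀ S ∈ List.ofFn P, Convex ℝ S := by
    intro S hS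
    rw [List.mem_ofFn] at hS
    obtain ⟨i, rfl⟩ := hS
    exact hconv i
  rw [hr1, hr2]
  exact chainSet_eq_of_min t (List.ofFn P) hconvList s ms1 ms2 hms1 hms2
end
end
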